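/- arXiv:1707.07927 — 7 statements merged into one kernel-verified Lean document; each statement's English description precedes it below -/
import Mathlib

section
/- Let n ≥ 0 be an integer and let F and f be holomorphic on an open set containing the ray R := {r e^{iπ/4} : r ≥ 0}. For k ≥ 0 define φ_f^{[k+1]}(u) := (1/k!)·∫ (v−u)^k f(v) dv, the integral over the ray {u + s e^{iπ/4} : s ≥ 0}. Assume: (i) r ↦ (1+r)^{n}·|f(r e^{iπ/4})| is integrable on [0,∞); (ii) r ↦ |F(r e^{iπ/4}) f(r e^{iπ/4})| and r ↦ |F^{(n+1)}(r e^{iπ/4})·φ_f^{[n+1]}(r e^{iπ/4})| are integrable on [0,∞); (iii) for each 0 ≤ k ≤ n, F^{(k)}(u)·φ_f^{[k+1]}(u) → 0 as |u| → ∞ along R. Then ∫_R F(u) f(u) du = Σ_{k=0}^{n} F^{(k)}(0)·φ_f^{[k+1]}(0) + ∫_R F^{(n+1)}(u)·φ_f^{[n+1]}(u) du. -/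
open MeasureTheory

noncomputable section

/-- The unit direction `e^{iπ/4}`. -/
def e4 : ℂ := Complex.exp (Complex.I * (Real.pi / 4 : ℝ))

/-- The ray `{r e^{iπ/4} : r ≥ 0}`. -/
def ray : Set ℂ := {z : ℂ | ∃ r : ℝ, 0 ≤ r ∧ z = (r : ℂ) * e4}

/-- `φ_f^{[k+1]}(u) := (1/k!)·∫ (v−u)^k f(v) dv` over the ray `{u + s e^{iπ/4} : s ≥ 0}`. -/
def phiRep (f : ℂ → ℂ) (k : ℕ) (u : ℂ) : ℂ :=
  (1 / (k.factorial : ℂ)) *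
    ∫ s in Set.Ioi (0 : ℝ), e4 * (((s : ℂ) * e4) ^ k * f (u + (s : ℂ) * e4))


lemma abs_e4 : ‖e4‖ = 1 := by
  simp [e4, Complex.norm_exp]

lemma hline : ∀ r : ℝ, HasDerivAt (fun r : ℝ => (r:ℂ) * e4) e4 r := by
  intro r
  simpa using (Complex.ofRealCLM.hasDerivAt (x := r)).mul_const e4

lemma hshift (g : ℝ → ℂ) (r : ℝ) :
    (∫ s in Set.Ioi (0:ℝ), g (s + r)) = ∫ t in Set.Ioi r, g t := by
  rw [← integral_indicator measurableSet_Ioi, ← integral_indicator measurableSet_Ioi,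
    ← MeasureTheory.integral_add_right_eq_self (Set.indicator (Set.Ioi r) g) r]
  congr 1
  ext s
  by_cases h : s ∈ Set.Ioi (0:ℝ)
  · rw [Set.indicator_of_mem h, Set.indicator_of_mem (by simp at h ⊢; linarith)]
  · rw [Set.indicator_of_notMem h, Set.indicator_of_notMem (by simp at h ⊢; linarith)]

lemma hnatid (m j : ℕ) :
    ((m+1).choose j : ℂ) * ((m+1-j : ℕ) : ℂ) = ((m:ℂ)+1) * (m.choose j) := by
  have h : (m+1).choose j * (m+1-j) = (m+1) * m.choose j := by
    rw [← Nat.choose_succ_right_eq, ← Nat.add_one_mul_choose_eq]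
  have h2 := congrArg (fun x : ℕ => (x : ℂ)) h
  push_cast at h2
  convert h2 using 2

lemma hzero (m : ℕ) (x : ℂ) :
    ∑ j ∈ Finset.range (m+2), x^j * (-x)^(m+1-j) * ((m+1).choose j : ℂ) = 0 := by
  have := (add_pow x (-x) (m+1)).symm
  rw [add_neg_cancel, zero_pow (Nat.succ_ne_zero m)] at this
  exact this

lemma sum_deriv (m : ℕ) (x w : ℂ) (p : ℕ → ℂ) :
    ∑ j ∈ Finset.range (m+2), ((m+1).choose j : ℂ) *
      ( (-1) * (((m+1-j : ℕ):ℂ) * (-x)^(m+1-j-1)) * p j + (-x)^(m+1-j) * (-(x^j * w)) )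
    = -((m:ℂ)+1) * ∑ j ∈ Finset.range (m+1), (m.choose j : ℂ) * ((-x)^(m-j) * p j) := by
  have hsplit : ∀ j, ((m+1).choose j : ℂ) *
      ( (-1) * (((m+1-j : ℕ):ℂ) * (-x)^(m+1-j-1)) * p j + (-x)^(m+1-j) * (-(x^j * w)) )
      = ((m+1).choose j : ℂ) * ((-1) * (((m+1-j : ℕ):ℂ) * (-x)^(m+1-j-1)) * p j)
        + (-w) * (x^j * (-x)^(m+1-j) * ((m+1).choose j : ℂ)) := fun j => by ring
  simp only [hsplit]
  rw [Finset.sum_add_distrib, ← Finset.mul_sum, hzero, mul_zero, add_zero,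
    Finset.sum_range_succ]
  have hlast : ((m+1).choose (m+1) : ℂ) *
      ((-1) * (((m+1-(m+1) : ℕ):ℂ) * (-x)^(m+1-(m+1)-1)) * p (m+1)) = 0 := by
    simp [Nat.sub_self]
  rw [hlast, add_zero, Finset.mul_sum]
  refine Finset.sum_congr rfl (fun j hj => ?_)
  have e1 : m+1-j-1 = m-j := by omega
  rw [e1]
  linear_combination (-((-x)^(m-j) * p j)) * hnatid m j

/-- integration by parts via Cauchy's formula for repeated integration. -/
theorem stmt_2 (n : ℕ) (U : Set ℂ) (hU : IsOpen U) (hray : ray ⊆ U)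
    (F f : ℂ → ℂ) (hF : DifferentiableOn ℂ F U) (hf : DifferentiableOn ℂ f U)
    (h1 : IntegrableOn
      (fun r : ℝ => (1 + r) ^ n * ‖f ((r : ℂ) * e4)‖) (Set.Ici 0))
    (h2 : IntegrableOn
      (fun r : ℝ => ‖F ((r : ℂ) * e4) * f ((r : ℂ) * e4)‖) (Set.Ici 0))
    (h3 : IntegrableOn (fun r : ℝ =>
      ‖iteratedDeriv (n + 1) F ((r : ℂ) * e4) * phiRep f n ((r : ℂ) * e4)‖)
      (Set.Ici 0))
    (h4 : ∀ k ≤ n,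
      Filter.Tendsto (fun r : ℝ => iteratedDeriv k F ((r : ℂ) * e4) * phiRep f k ((r : ℂ) * e4))
        Filter.atTop (nhds 0)) :
    (∫ r in Set.Ioi (0 : ℝ), e4 * (F ((r : ℂ) * e4) * f ((r : ℂ) * e4))) =
      (∑ k ∈ Finset.range (n + 1), iteratedDeriv k F 0 * phiRep f k 0) +
        ∫ r in Set.Ioi (0 : ℝ),
          e4 * (iteratedDeriv (n + 1) F ((r : ℂ) * e4) * phiRep f n ((r : ℂ) * e4)) := by
  classical
  -- membership
  have hmem : ∀ r : ℝ, 0 ≤ r → ((r:ℂ) * e4) ∈ U := fun r hr => hray ⟨r, hr, rfl⟩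
  obtain ⟨ε, hε0, hball⟩ : ∃ ε > 0, ∀ r : ℝ, |r| < ε → ((r:ℂ)*e4) ∈ U := by
    have h0 : ((0:ℝ):ℂ) * e4 ∈ U := hmem 0 le_rfl
    have hcont : Continuous (fun r : ℝ => (r:ℂ) * e4) := by continuity
    rcases Metric.isOpen_iff.1 (hU.preimage hcont) 0 h0 with ⟨ε, hε, hsub⟩
    exact ⟨ε, hε, fun r hr => hsub (by simpa [Real.dist_eq] using hr)⟩
  have hmem' : ∀ r : ℝ, -ε < r → ((r:ℂ)*e4) ∈ U := by
    intro r hr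
    rcases le_or_gt 0 r with h|h
    · exact hmem r h
    · exact hball r (abs_lt.2 ⟨hr, by linarith⟩)
  -- analyticity
  have hFk : ∀ k : ℕ, AnalyticOnNhd ℂ (iteratedDeriv k F) U := by
    intro k; induction k with
    | zero => simpa [iteratedDeriv_zero] using (hF.analyticOnNhd hU)
    | succ k ih => rw [iteratedDeriv_succ]; exact ih.deriv
  have hfa : AnalyticOnNhd ℂ f U := hf.analyticOnNhd hU
  -- derivative of iterated derivatives along the ray
  have hD : ∀ (k : ℕ) (r : ℝ), -ε < r →
      HasDerivAt (fun u : ℝ => iteratedDeriv k F ((u:ℂ)*e4))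
        (e4 * iteratedDeriv (k+1) F ((r:ℂ)*e4)) r := by
    intro k r hr
    have h1' : HasDerivAt (iteratedDeriv k F) (iteratedDeriv (k+1) F ((r:ℂ)*e4)) ((r:ℂ)*e4) := by
      have h := ((hFk k) _ (hmem' r hr)).differentiableAt.hasDerivAt
      rw [iteratedDeriv_succ]
      exact h
    have h := h1'.scomp r (hline r)
    simp only [smul_eq_mul] at h
    exact h
  -- continuity of f along the ray
  have hfc : ∀ r : ℝ, -ε < r → ContinuousAt (fun t : ℝ => f ((t:ℂ)*e4)) r := by
    intro r hr
    have hc : ContinuousAt f ((r:ℂ)*e4) := (hfa _ (hmem' r hr)).differentiableAt.continuousAt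
    exact ContinuousAt.comp (x := r) hc (hline r).continuousAt
  -- continuity of the integrands
  have contOn : ∀ j : ℕ, ContinuousOn (fun t : ℝ => ((t:ℂ))^j * f ((t:ℂ)*e4)) (Set.Ioi (-ε)) := by
    intro j t ht
    exact (((Complex.continuous_ofReal.pow j).continuousAt).mul (hfc t ht)).continuousWithinAt
  -- integrability of monomials against f on the tail
  have intP : ∀ j : ℕ, j ≤ n → ∀ r : ℝ, -ε < r →
      IntegrableOn (fun t : ℝ => ((t:ℂ))^j * f ((t:ℂ)*e4)) (Set.Ioi r) := by
    intro j hj r hr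
    have base : IntegrableOn (fun t : ℝ => ((t:ℂ))^j * f ((t:ℂ)*e4)) (Set.Ioi 0) := by
      refine Integrable.mono' (h1.mono_set Set.Ioi_subset_Ici_self)
        (((contOn j).mono (Set.Ioi_subset_Ioi (by linarith))).aestronglyMeasurable
          measurableSet_Ioi) ?_
      refine (ae_restrict_iff' measurableSet_Ioi).2 (Filter.Eventually.of_forall ?_)
      intro t ht
      have ht0 : (0:ℝ) ≤ t := le_of_lt ht
      have h1t : (0:ℝ) ≤ 1 + t := by linarith
      rw [norm_mul, norm_pow, Complex.norm_of_nonneg ht0]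
      have hb : t^j ≤ (1+t)^n := by
        calc t^j ≤ (1+t)^j := pow_le_pow_left₀ ht0 (by linarith) j
        _ ≤ (1+t)^n := pow_le_pow_right₀ (by linarith) hj
      exact mul_le_mul_of_nonneg_right hb (norm_nonneg _)
    rcases le_or_gt 0 r with h|h
    · exact base.mono_set (Set.Ioi_subset_Ioi h)
    · rw [← Set.Ioc_union_Ioi_eq_Ioi (le_of_lt h)]
      refine IntegrableOn.union ?_ base
      have hsub : Set.Icc r 0 ⊆ Set.Ioi (-ε) := fun t ht => lt_of_lt_of_le hr ht.1
      exact (((contOn j).mono hsub).integrableOn_compact isCompact_Icc).mono_set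
        Set.Ioc_subset_Icc_self
  -- P and its derivative
  set P : ℕ → ℝ → ℂ := fun j r => ∫ t in Set.Ioi r, ((t:ℂ))^j * f ((t:ℂ)*e4) with hPdef
  have hIderiv : ∀ (j : ℕ) (r : ℝ), -ε < r →
      HasDerivAt (fun u : ℝ => ∫ t in (0:ℝ)..u, ((t:ℂ))^j * f ((t:ℂ)*e4))
        (((r:ℂ))^j * f ((r:ℂ)*e4)) r := by
    intro j r hr
    have huIcc : Set.uIcc (0:ℝ) r ⊆ Set.Ioi (-ε) := by
      intro t ht
      rcases Set.mem_uIcc.1 ht with ⟨h,_⟩|⟨h,_⟩ <;> simp only [Set.mem_Ioi] <;> linarith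
    refine intervalIntegral.integral_hasDerivAt_right
      (((contOn j).mono huIcc).intervalIntegrable)
      ((contOn j).stronglyMeasurableAtFilter isOpen_Ioi r hr) ?_
    exact ((Complex.continuous_ofReal.pow j).continuousAt).mul (hfc r hr)
  have hPsplit : ∀ (j : ℕ), j ≤ n → ∀ r : ℝ, -ε < r →
      P j r = P j 0 - ∫ t in (0:ℝ)..r, ((t:ℂ))^j * f ((t:ℂ)*e4) := by
    intro j hj r hr
    rcases le_or_gt 0 r with h|h
    · have hsplit := setIntegral_union (Set.Ioc_disjoint_Ioi le_rfl) measurableSet_Ioi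
        ((intP j hj 0 (by linarith)).mono_set Set.Ioc_subset_Ioi_self) (intP j hj r hr)
      rw [Set.Ioc_union_Ioi_eq_Ioi h] at hsplit
      rw [intervalIntegral.integral_of_le h, hPdef]
      simp only []
      rw [hsplit]
      ring
    · have hsplit := setIntegral_union (Set.Ioc_disjoint_Ioi le_rfl) measurableSet_Ioi
        ((intP j hj r hr).mono_set Set.Ioc_subset_Ioi_self) (intP j hj 0 (by linarith))
      rw [Set.Ioc_union_Ioi_eq_Ioi (le_of_lt h)] at hsplit
      rw [intervalIntegral.integral_symm, intervalIntegral.integral_of_le (le_of_lt h), hPdef]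
      simp only []
      rw [hsplit]
      ring
  have hPderiv : ∀ (j : ℕ), j ≤ n → ∀ r : ℝ, -ε < r →
      HasDerivAt (P j) (-(((r:ℂ))^j * f ((r:ℂ)*e4))) r := by
    intro j hj r hr
    have heq : (fun u => P j 0 - ∫ t in (0:ℝ)..u, ((t:ℂ))^j * f ((t:ℂ)*e4)) =ᶠ[nhds r] P j := by
      filter_upwards [isOpen_Ioi.mem_nhds (show r ∈ Set.Ioi (-ε) from hr)] with u hu
      exact (hPsplit j hj u hu).symm
    exact (((hIderiv j r hr).const_sub (P j 0))).congr_of_eventuallyEq heq.symm |>.congr_deriv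
      (by ring)
  -- Q and its formula
  set Q : ℕ → ℝ → ℂ := fun k r => ∫ t in Set.Ioi r, ((t:ℂ) - (r:ℂ))^k * f ((t:ℂ)*e4) with hQdef
  have hQsum : ∀ (k : ℕ), k ≤ n → ∀ r : ℝ, -ε < r →
      Q k r = ∑ j ∈ Finset.range (k+1), (k.choose j : ℂ) * ((-(r:ℂ))^(k-j) * P j r) := by
    intro k hk r hr
    have hpt : ∀ t : ℝ, ((t:ℂ) - (r:ℂ))^k * f ((t:ℂ)*e4)
        = ∑ j ∈ Finset.range (k+1),
            (k.choose j : ℂ) * ((-(r:ℂ))^(k-j) * (((t:ℂ))^j * f ((t:ℂ)*e4))) := by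
      intro t
      rw [sub_eq_add_neg, add_pow, Finset.sum_mul]
      exact Finset.sum_congr rfl (fun j _ => by ring)
    calc Q k r = ∫ t in Set.Ioi r, ∑ j ∈ Finset.range (k+1),
            (k.choose j : ℂ) * ((-(r:ℂ))^(k-j) * (((t:ℂ))^j * f ((t:ℂ)*e4))) := by
          rw [hQdef]; exact setIntegral_congr_fun measurableSet_Ioi (fun t _ => hpt t)
      _ = ∑ j ∈ Finset.range (k+1), ∫ t in Set.Ioi r,
            (k.choose j : ℂ) * ((-(r:ℂ))^(k-j) * (((t:ℂ))^j * f ((t:ℂ)*e4))) := by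
          refine integral_finset_sum _ (fun j hj => ?_)
          exact ((intP j (le_trans (Nat.lt_succ_iff.1 (Finset.mem_range.1 hj)) hk) r hr).const_mul
            ((k.choose j : ℂ) * (-(r:ℂ))^(k-j))).congr (ae_of_all _ (fun t => by ring))
      _ = ∑ j ∈ Finset.range (k+1), (k.choose j : ℂ) * ((-(r:ℂ))^(k-j) * P j r) := by
          refine Finset.sum_congr rfl (fun j hj => ?_)
          rw [← integral_const_mul, ← integral_const_mul]
  have hQ0P : Q 0 = P 0 := by
    funext r
    simp [hQdef, hPdef]
  have hQd0 : ∀ r : ℝ, -ε < r → HasDerivAt (Q 0) (-(f ((r:ℂ)*e4))) r := by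
    intro r hr
    have h := hPderiv 0 (Nat.zero_le n) r hr
    rw [hQ0P]
    simpa using h
  have hQdS : ∀ (m : ℕ), m + 1 ≤ n → ∀ r : ℝ, -ε < r →
      HasDerivAt (Q (m+1)) (-((m:ℂ)+1) * Q m r) r := by
    intro m hm r hr
    have hterm : ∀ j ∈ Finset.range (m+2),
        HasDerivAt (fun u : ℝ => ((m+1).choose j : ℂ) * ((-(u:ℂ))^(m+1-j) * P j u))
          (((m+1).choose j : ℂ) *
            ( (-1) * (((m+1-j : ℕ):ℂ) * (-(r:ℂ))^(m+1-j-1)) * P j r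
              + (-(r:ℂ))^(m+1-j) * (-(((r:ℂ))^j * f ((r:ℂ)*e4))) )) r := by
      intro j hj
      have hjn : j ≤ n := by
        have := Finset.mem_range.1 hj; omega
      have hneg : HasDerivAt (fun u : ℝ => -((u:ℂ))) (-1) r := by
        have h := (Complex.ofRealCLM.hasDerivAt (x := r)).neg
        simp at h
        exact h
      have hpow : HasDerivAt (fun u : ℝ => (-(u:ℂ))^(m+1-j))
          ((-1) * (((m+1-j : ℕ):ℂ) * (-(r:ℂ))^(m+1-j-1))) r := by
        have h := (hasDerivAt_pow (m+1-j) (-(r:ℂ))).scomp r hneg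
        simp only [smul_eq_mul] at h
        exact h
      exact ((hpow.mul (hPderiv j hjn r hr)).const_mul _)
    have hsum := HasDerivAt.fun_sum hterm
    have heq : (fun u : ℝ => ∑ j ∈ Finset.range (m+2),
        ((m+1).choose j : ℂ) * ((-(u:ℂ))^(m+1-j) * P j u)) =ᶠ[nhds r] Q (m+1) := by
      filter_upwards [isOpen_Ioi.mem_nhds (show r ∈ Set.Ioi (-ε) from hr)] with u hu
      exact (hQsum (m+1) hm u hu).symm
    have hthis := hsum.congr_of_eventuallyEq heq.symm
    rwa [sum_deriv m (r:ℂ) (f ((r:ℂ)*e4)) (fun j => P j r),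
      ← hQsum m (by omega) r hr] at hthis
  -- phiRep in terms of Q
  have hPhiQ : ∀ (k : ℕ) (r : ℝ),
      phiRep f k ((r:ℂ)*e4) = (e4^(k+1) / (k.factorial : ℂ)) * Q k r := by
    intro k r
    have hint : (∫ s in Set.Ioi (0:ℝ), e4 * (((s:ℂ) * e4)^k * f ((r:ℂ)*e4 + (s:ℂ)*e4)))
        = ∫ s in Set.Ioi (0:ℝ),
            e4^(k+1) * ((fun t : ℝ => ((t:ℂ) - (r:ℂ))^k * f ((t:ℂ)*e4)) (s + r)) := by
      refine setIntegral_congr_fun measurableSet_Ioi (fun s _ => ?_)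
      simp only []
      push_cast
      rw [show ((s:ℂ)+(r:ℂ)) - (r:ℂ) = (s:ℂ) by ring,
        show ((s:ℂ)+(r:ℂ))*e4 = (r:ℂ)*e4 + (s:ℂ)*e4 by ring]
      ring
    rw [phiRep, hint, integral_const_mul,
      hshift (fun t : ℝ => ((t:ℂ) - (r:ℂ))^k * f ((t:ℂ)*e4)) r]
    rw [hQdef]
    ring
  have hPhifun : ∀ k : ℕ, (fun u : ℝ => phiRep f k ((u:ℂ)*e4))
      = fun u => (e4^(k+1) / (k.factorial : ℂ)) * Q k u := fun k => funext (fun u => hPhiQ k u)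
  have hPd0 : ∀ r : ℝ, -ε < r →
      HasDerivAt (fun u : ℝ => phiRep f 0 ((u:ℂ)*e4)) (-(e4 * f ((r:ℂ)*e4))) r := by
    intro r hr
    rw [hPhifun 0]
    have h := (hQd0 r hr).const_mul (e4^(0+1) / ((0:ℕ).factorial : ℂ))
    refine h.congr_deriv ?_
    simp [Nat.factorial]
  have hPdS : ∀ (k : ℕ), k + 1 ≤ n → ∀ r : ℝ, -ε < r →
      HasDerivAt (fun u : ℝ => phiRep f (k+1) ((u:ℂ)*e4)) (-(e4 * phiRep f k ((r:ℂ)*e4))) r := by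
    intro k hk r hr
    rw [hPhifun (k+1)]
    have h := (hQdS k hk r hr).const_mul (e4^(k+1+1) / ((k+1).factorial : ℂ))
    refine h.congr_deriv ?_
    rw [hPhiQ k r]
    have h1 : (((k+1).factorial : ℂ)) = ((k:ℂ)+1) * (k.factorial : ℂ) := by
      rw [Nat.factorial_succ]; push_cast; ring
    have h2 : ((k.factorial : ℂ)) ≠ 0 := Nat.cast_ne_zero.2 k.factorial_ne_zero
    have h3 : ((k:ℂ)+1) ≠ 0 := Nat.cast_add_one_ne_zero k
    rw [h1]
    field_simp
    ring
  -- the telescoping function G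
  set G : ℝ → ℂ := fun r => ∑ k ∈ Finset.range (n+1),
      iteratedDeriv k F ((r:ℂ)*e4) * phiRep f k ((r:ℂ)*e4) with hGdef
  set Bf : ℝ → ℂ := fun r => e4 * (F ((r:ℂ)*e4) * f ((r:ℂ)*e4)) with hBdef
  set Af : ℝ → ℂ := fun r =>
      e4 * (iteratedDeriv (n+1) F ((r:ℂ)*e4) * phiRep f n ((r:ℂ)*e4)) with hAdef
  have hGd : ∀ r : ℝ, -ε < r → HasDerivAt G (Af r - Bf r) r := by
    intro r hr
    set A : ℕ → ℂ := fun j => match j with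
      | 0 => e4 * (F ((r:ℂ)*e4) * f ((r:ℂ)*e4))
      | Nat.succ i => e4 * (iteratedDeriv (i+1) F ((r:ℂ)*e4) * phiRep f i ((r:ℂ)*e4))
      with hAdef'
    have hterm : ∀ k ∈ Finset.range (n+1),
        HasDerivAt (fun u : ℝ => iteratedDeriv k F ((u:ℂ)*e4) * phiRep f k ((u:ℂ)*e4))
          (A (k+1) - A k) r := by
      intro k hk
      have hkn : k ≤ n := Nat.lt_succ_iff.1 (Finset.mem_range.1 hk)
      cases k with
      | zero =>
        have h := (hD 0 r hr).mul (hPd0 r hr)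
        refine h.congr_deriv ?_
        simp only [hAdef', iteratedDeriv_zero]
        ring
      | succ i =>
        have h := (hD (i+1) r hr).mul (hPdS i hkn r hr)
        refine h.congr_deriv ?_
        simp only [hAdef']
        ring
    have hsum := HasDerivAt.fun_sum hterm
    rw [Finset.sum_range_sub A] at hsum
    have hval : A (n+1) - A 0 = Af r - Bf r := by
      simp only [hAdef', hAdef, hBdef]
    rwa [hval] at hsum
  have hGt : Filter.Tendsto G Filter.atTop (nhds 0) := by
    have h := tendsto_finset_sum (Finset.range (n+1))
      (fun k hk => h4 k (Nat.lt_succ_iff.1 (Finset.mem_range.1 hk)))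
    simpa using h
  -- integrability
  have hphicontn : ∀ r : ℝ, -ε < r → ContinuousAt (fun u : ℝ => phiRep f n ((u:ℂ)*e4)) r := by
    intro r hr
    cases n with
    | zero => exact (hPd0 r hr).continuousAt
    | succ i => exact (hPdS i le_rfl r hr).continuousAt
  have hcontA : ContinuousOn Af (Set.Ioi (-ε)) := by
    intro r hr
    exact (continuousAt_const.mul
      (((hD (n+1) r hr).continuousAt).mul (hphicontn r hr))).continuousWithinAt
  have hcontB : ContinuousOn Bf (Set.Ioi (-ε)) := by
    intro r hr
    have hFc : ContinuousAt (fun u : ℝ => F ((u:ℂ)*e4)) r := by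
      have := (hD 0 r hr).continuousAt
      simpa [iteratedDeriv_zero] using this
    exact (continuousAt_const.mul (hFc.mul (hfc r hr))).continuousWithinAt
  have hsub0 : Set.Ioi (0:ℝ) ⊆ Set.Ioi (-ε) := Set.Ioi_subset_Ioi (by linarith)
  have intA : IntegrableOn Af (Set.Ioi 0) := by
    refine Integrable.mono' (h3.mono_set Set.Ioi_subset_Ici_self)
      ((hcontA.mono hsub0).aestronglyMeasurable measurableSet_Ioi)
      (Filter.Eventually.of_forall (fun r => ?_))
    rw [hAdef]
    simp only []
    rw [norm_mul, abs_e4, one_mul]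
  have intB : IntegrableOn Bf (Set.Ioi 0) := by
    refine Integrable.mono' (h2.mono_set Set.Ioi_subset_Ici_self)
      ((hcontB.mono hsub0).aestronglyMeasurable measurableSet_Ioi)
      (Filter.Eventually.of_forall (fun r => ?_))
    rw [hBdef]
    simp only []
    rw [norm_mul, abs_e4, one_mul]
  -- conclusion
  have key := integral_Ioi_of_hasDerivAt_of_tendsto'
    (f' := fun r => Af r - Bf r) (a := 0) (m := 0)
    (fun r hr => hGd r (lt_of_lt_of_le (by linarith) hr)) (intA.sub intB) hGt
  rw [integral_sub intA intB] at key
  have hG0 : G 0 = ∑ k ∈ Finset.range (n+1), iteratedDeriv k F 0 * phiRep f k 0 := by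
    rw [hGdef]
    simp
  rw [hG0] at key
  have hAint : (∫ r in Set.Ioi (0:ℝ), Af r)
      = ∫ r in Set.Ioi (0:ℝ),
          e4 * (iteratedDeriv (n+1) F ((r:ℂ)*e4) * phiRep f n ((r:ℂ)*e4)) := rfl
  have hBint : (∫ r in Set.Ioi (0:ℝ), Bf r)
      = ∫ r in Set.Ioi (0:ℝ), e4 * (F ((r:ℂ)*e4) * f ((r:ℂ)*e4)) := rfl
  rw [hAint, hBint] at key
  linear_combination -key
end
end

section
/- Let t > 1, 0 < δ < 1, Λ ≥ 0, and λ_c := t^{δ−1}/(1−t^{δ−1}). Suppose ζ is holomorphic on an open set U ⊆ ℂ, its values avoid the sets (−∞, −1/λ_c] and [1, ∞), and for every u ∈ U it satisfies λ_c ζ(u)·[ln(1+Λ) + Log(1+λ_c ζ(u)) − Log(1−ζ(u))] + Log(1+λ_c ζ(u)) + λ_c·Log(1−ζ(u)) = (λ_c/2)(1+λ_c)·u² + λ_c·ln(1+Λ)·u. Then at every u ∈ U where ln(1+Λ) + Log(1+λ_c ζ(u)) − Log(1−ζ(u)) ≠ 0, one has ζ′(u) = (ln(1+Λ) + (1+λ_c)·u)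 / (ln(1+Λ) + Log(1+λ_c ζ(u)) − Log(1−ζ(u))). -/
open MeasureTheory

noncomputable section

/-- `λ_c := t^(δ-1)/(1-t^(δ-1))`. -/
def lamc (δ t : ℝ) : ℝ := t ^ (δ - 1) / (1 - t ^ (δ - 1))

/-- if a holomorphic `ζ` satisfies the functional equation, then its derivative
is given by the stated formula wherever the denominator is nonzero. -/
theorem stmt_3 (t δ Λ : ℝ) (ht : 1 < t) (hδ0 : 0 < δ) (hδ1 : δ < 1) (hΛ : 0 ≤ Λ)
    (U : Set ℂ) (hU : IsOpen U) (ζ : ℂ → ℂ) (hζ : DifferentiableOn ℂ ζ U)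
    (havoid1 : ∀ u ∈ U, ¬((ζ u).im = 0 ∧ (ζ u).re ≤ -1 / lamc δ t))
    (havoid2 : ∀ u ∈ U, ¬((ζ u).im = 0 ∧ 1 ≤ (ζ u).re))
    (heq : ∀ u ∈ U,
      (lamc δ t : ℂ) * ζ u *
            ((Real.log (1 + Λ) : ℂ) + Complex.log (1 + (lamc δ t : ℂ) * ζ u) -
              Complex.log (1 - ζ u)) +
          Complex.log (1 + (lamc δ t : ℂ) * ζ u) + (lamc δ t : ℂ) * Complex.log (1 - ζ u) =
        ((lamc δ t : ℂ) / 2) * (1 + (lamc δ t : ℂ)) * u ^ 2 +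
          (lamc δ t : ℂ) * (Real.log (1 + Λ) : ℂ) * u) :
    ∀ u ∈ U,
      (Real.log (1 + Λ) : ℂ) + Complex.log (1 + (lamc δ t : ℂ) * ζ u) -
          Complex.log (1 - ζ u) ≠ 0 →
      deriv ζ u =
        ((Real.log (1 + Λ) : ℂ) + (1 + (lamc δ t : ℂ)) * u) /
          ((Real.log (1 + Λ) : ℂ) + Complex.log (1 + (lamc δ t : ℂ) * ζ u) -
            Complex.log (1 - ζ u)) := by
  intro u hu hne
  have hx0 : (0:ℝ) < t ^ (δ - 1) := Real.rpow_pos_of_pos (by linarith) _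
  have hx1 : t ^ (δ - 1) < 1 := Real.rpow_lt_one_of_one_lt_of_neg ht (by linarith)
  have hlpos : 0 < lamc δ t := div_pos hx0 (by linarith)
  set lam : ℂ := (lamc δ t : ℂ) with hlamdef
  have hlam0 : lam ≠ 0 := Complex.ofReal_ne_zero.mpr hlpos.ne'
  have hζu : DifferentiableAt ℂ ζ u := hζ.differentiableAt (hU.mem_nhds hu)
  have hz : HasDerivAt ζ (deriv ζ u) u := hζu.hasDerivAt
  set z' := deriv ζ u with hz'def
  have hmem1 : (1 + lam * ζ u) ∈ Complex.slitPlane := by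
    rcases eq_or_ne (ζ u).im 0 with him | him
    · left
      have hre : -1 / lamc δ t < (ζ u).re := by
        by_contra h; exact havoid1 u hu ⟨him, le_of_not_gt h⟩
      have hre' : (1 + lam * ζ u).re = 1 + lamc δ t * (ζ u).re := by
        simp [hlamdef, Complex.add_re, Complex.mul_re, him]
      rw [hre']
      have hd : lamc δ t * (-1 / lamc δ t) = -1 := by field_simp
      nlinarith [mul_lt_mul_of_pos_left hre hlpos]
    · right
      have : (1 + lam * ζ u).im = lamc δ t * (ζ u).im := by
        simp [hlamdef, Complex.add_im, Complex.mul_im]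
      rw [this]
      exact mul_ne_zero hlpos.ne' him
  have hmem2 : (1 - ζ u) ∈ Complex.slitPlane := by
    rcases eq_or_ne (ζ u).im 0 with him | him
    · left
      have hre : (ζ u).re < 1 := by
        by_contra h; exact havoid2 u hu ⟨him, le_of_not_gt h⟩
      simp [Complex.sub_re]; linarith
    · right
      simp [Complex.sub_im]; exact him
  have h1 : (1 + lam * ζ u) ≠ 0 := Complex.slitPlane_ne_zero hmem1
  have h2 : (1 - ζ u) ≠ 0 := Complex.slitPlane_ne_zero hmem2
  set L : ℂ := (Real.log (1 + Λ) : ℂ) with hLdef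
  have hA : HasDerivAt (fun v => Complex.log (1 + lam * ζ v))
      ((1 + lam * ζ u)⁻¹ * (lam * z')) u :=
    by have := (Complex.hasStrictDerivAt_log hmem1).hasDerivAt.comp u ((hz.const_mul lam).const_add 1); exact this
  have hB : HasDerivAt (fun v => Complex.log (1 - ζ v)) ((1 - ζ u)⁻¹ * (-z')) u :=
    by have := (Complex.hasStrictDerivAt_log hmem2).hasDerivAt.comp u (hz.const_sub 1); exact this
  have hD : HasDerivAt (fun v => L + Complex.log (1 + lam * ζ v) - Complex.log (1 - ζ v))
      ((1 + lam * ζ u)⁻¹ * (lam * z') - (1 - ζ u)⁻¹ * (-z')) u := (hA.const_add L).sub hB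
  have hF : HasDerivAt (fun v => lam * ζ v *
      (L + Complex.log (1 + lam * ζ v) - Complex.log (1 - ζ v)) +
      Complex.log (1 + lam * ζ v) + lam * Complex.log (1 - ζ v))
      (lam * z' * (L + Complex.log (1 + lam * ζ u) - Complex.log (1 - ζ u)) +
        lam * ζ u * ((1 + lam * ζ u)⁻¹ * (lam * z') - (1 - ζ u)⁻¹ * (-z')) +
        (1 + lam * ζ u)⁻¹ * (lam * z') + lam * ((1 - ζ u)⁻¹ * (-z'))) u :=
    (((hz.const_mul lam).mul hD).add hA).add (hB.const_mul lam)
  have hR : HasDerivAt (fun v : ℂ => (lam / 2) * (1 + lam) * v ^ 2 + lam * L * v)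
      ((lam / 2) * (1 + lam) * (2 * u ^ 1) + lam * L * 1) u :=
    ((hasDerivAt_pow 2 u).const_mul ((lam / 2) * (1 + lam))).add
      ((hasDerivAt_id u).const_mul (lam * L))
  have hFR : (fun v => lam * ζ v *
      (L + Complex.log (1 + lam * ζ v) - Complex.log (1 - ζ v)) +
      Complex.log (1 + lam * ζ v) + lam * Complex.log (1 - ζ v))
      =ᶠ[nhds u] (fun v : ℂ => (lam / 2) * (1 + lam) * v ^ 2 + lam * L * v) := by
    filter_upwards [hU.mem_nhds hu] with v hv using heq v hv
  have hkey := (hF.congr_of_eventuallyEq hFR.symm).unique hR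
  have c1 : lam * ζ u * ((1 + lam * ζ u)⁻¹ * (lam * z') - (1 - ζ u)⁻¹ * (-z')) +
      (1 + lam * ζ u)⁻¹ * (lam * z') + lam * ((1 - ζ u)⁻¹ * (-z')) = 0 := by
    field_simp
    ring
  have key : lam * ((deriv ζ u) *
      (L + Complex.log (1 + lam * ζ u) - Complex.log (1 - ζ u))) =
      lam * (L + (1 + lam) * u) := by
    linear_combination hkey - c1
  rw [eq_div_iff hne]
  exact mul_left_cancel₀ hlam0 key
end
end

section
/- Fix 0 < δ < 1. There exists a constant C₁ > 0, depending only on δ (in particular independent of t and Λ), such that for all t > 1, all Λ with 0 ≤ Λ ≤ (t^{1−δ}−1)/λ_c − 1, and all r > 0: |Φ(r e^{iπ/4}; t, Λ)| ≤ C₁·|Φ(0; t, Λ)|. -/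
open MeasureTheory

noncomputable section

/-- The exponential factor `exp((i λ_c t/2)(v² + (2 ln(1+Λ)/(1+λ_c))·v))`. -/
def phase (δ t Λ : ℝ) (v : ℂ) : ℂ :=
  Complex.exp (Complex.I * ((lamc δ t * t / 2 : ℝ) : ℂ) *
    (v ^ 2 + ((2 * Real.log (1 + Λ) / (1 + lamc δ t) : ℝ) : ℂ) * v))

/-- `Φ(u;t,Λ)`: integral of the phase over the ray `{u + r e^{iπ/4} : r ≥ 0}`. -/
def Phi (δ t Λ : ℝ) (u : ℂ) : ℂ :=
  ∫ r in Set.Ioi (0 : ℝ), e4 * phase δ t Λ (u + (r : ℂ) * e4)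

namespace Stmt7Aux

open Set Real Filter

lemma g_integrable {c b : ℝ} (hc : 0 < c) (hb : 0 ≤ b) :
    IntegrableOn (fun s => Real.exp (-(c*s^2+b*s))) (Set.Ioi 0) := by
  apply Integrable.mono' ((integrable_exp_neg_mul_sq hc).integrableOn)
  · exact (Real.continuous_exp.comp (by continuity)).aestronglyMeasurable
  · rw [ae_restrict_iff' measurableSet_Ioi]
    filter_upwards with s hs
    rw [Real.norm_eq_abs, abs_of_pos (Real.exp_pos _), Real.exp_le_exp]
    nlinarith [le_of_lt (mem_Ioi.mp hs), mul_nonneg hb (le_of_lt (mem_Ioi.mp hs))]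

lemma gcos_integrable {c b : ℝ} (hc : 0 < c) (hb : 0 ≤ b) :
    IntegrableOn (fun s => Real.exp (-(c*s^2+b*s)) * Real.cos (b*s)) (Set.Ioi 0) := by
  apply Integrable.mono' (g_integrable hc hb)
  · exact ((Real.continuous_exp.comp (by continuity)).mul
      (Real.continuous_cos.comp (by continuity))).aestronglyMeasurable
  · filter_upwards with s
    rw [Real.norm_eq_abs, abs_mul, abs_of_pos (Real.exp_pos _)]
    calc Real.exp _ * |Real.cos (b*s)| ≤ Real.exp _ * 1 := by
          gcongr; exact Real.abs_cos_le_one _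
      _ = _ := mul_one _

lemma numeric_k : (0:ℝ) < Real.sqrt 2/2 - 4*Real.exp (-(π/4))/π := by
  have hpi : (3.14:ℝ) < π := by linarith [Real.pi_gt_d6]
  have hs : (1.41:ℝ) < Real.sqrt 2 := by
    have := Real.sq_sqrt (by norm_num : (0:ℝ) ≤ 2)
    nlinarith [Real.sqrt_nonneg 2]
  have he3 : (2.09:ℝ) ^ 4 ≤ Real.exp (3/4) ^ 4 := by
    have h1 : Real.exp (3/4) ^ 4 = Real.exp 1 ^ 3 := by
      rw [← Real.exp_nat_mul, ← Real.exp_nat_mul]; norm_num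
    rw [h1]
    have h9 := Real.exp_one_gt_d9
    have hp := Real.exp_pos 1
    nlinarith [h9, hp, sq_nonneg (Real.exp 1 - 2.7182818283)]
  have he : (2.09:ℝ) ≤ Real.exp (3/4) :=
    le_of_pow_le_pow_left₀ (by norm_num) (le_of_lt (Real.exp_pos _)) he3
  have hle : Real.exp (-(π/4)) ≤ Real.exp (-(3/4)) := by
    rw [Real.exp_le_exp]; linarith
  have h2 : Real.exp (-(3/4)) ≤ 0.48 := by
    rw [Real.exp_neg]
    rw [inv_le_comm₀ (Real.exp_pos _) (by norm_num)]
    calc (0.48:ℝ)⁻¹ ≤ 2.09 := by norm_num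
      _ ≤ _ := he
  have hepos := Real.exp_pos (-(π/4))
  have : 4*Real.exp (-(π/4))/π ≤ 4*(0.48:ℝ)/3.14 := by
    apply div_le_div₀ (by norm_num) (by linarith) (by norm_num) (by linarith)
  nlinarith


lemma int_exp_decay {b : ℝ} (hb : 0 < b) (s0 : ℝ) :
    ∫ s in Set.Ioi s0, Real.exp (-(b*s)) = Real.exp (-(b*s0))/b := by
  have h := integral_Ioi_of_hasDerivAt_of_tendsto' (f := fun s => -Real.exp (-(b*s))/b)
    (f' := fun s => Real.exp (-(b*s))) (a := s0) (m := 0) ?_ ?_ ?_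
  · rw [h]; field_simp; ring
  · intro x _
    have h1 : HasDerivAt (fun s : ℝ => -(b*s)) (-b) x := by
      simpa using (hasDerivAt_id x).const_mul (-b)
    have h2 := (h1.exp).neg.div_const b
    rw [show Real.exp (-(b*x)) = -(Real.exp (-(b*x)) * -b) / b by field_simp]
    exact h2
  · have : IntegrableOn (fun x => Real.exp (-b * x)) (Set.Ioi s0) :=
      exp_neg_integrableOn_Ioi s0 hb
    simpa [neg_mul] using this
  · rw [show (0:ℝ) = -0/b by simp]
    apply Filter.Tendsto.div_const
    apply Filter.Tendsto.neg
    apply Real.tendsto_exp_atBot.comp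
    exact tendsto_neg_atTop_atBot.comp (Filter.tendsto_id.const_mul_atTop hb)

-- upper bound for tail: ∫_{Ioi s0} g ≤ exp(-(c s0^2)) * exp(-(b s0))/b
lemma tail_bound {c b : ℝ} (hc : 0 < c) (hb : 0 < b) {s0 : ℝ} (hs0 : 0 ≤ s0) :
    ∫ s in Set.Ioi s0, Real.exp (-(c*s^2+b*s))
      ≤ Real.exp (-(c*s0^2)) * (Real.exp (-(b*s0))/b) := by
  have hint : IntegrableOn (fun s => Real.exp (-(c*s^2+b*s))) (Set.Ioi s0) :=
    (g_integrable hc hb.le).mono_set (Set.Ioi_subset_Ioi hs0)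
  have hint2 : IntegrableOn (fun s => Real.exp (-(c*s0^2)) * Real.exp (-(b*s))) (Set.Ioi s0) :=
    by simpa [neg_mul, IntegrableOn] using (exp_neg_integrableOn_Ioi s0 hb).const_mul (Real.exp (-(c*s0^2)))
  calc ∫ s in Set.Ioi s0, Real.exp (-(c*s^2+b*s))
      ≤ ∫ s in Set.Ioi s0, Real.exp (-(c*s0^2)) * Real.exp (-(b*s)) := by
        apply setIntegral_mono_on hint hint2 measurableSet_Ioi
        intro s hs
        rw [← Real.exp_add, Real.exp_le_exp]
        have h1 : s0 ≤ s := le_of_lt (mem_Ioi.mp hs)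
        nlinarith [mul_nonneg (sub_nonneg.mpr h1) (by linarith : (0:ℝ) ≤ s + s0), hc.le]
    _ = Real.exp (-(c*s0^2)) * (Real.exp (-(b*s0))/b) := by
        rw [integral_const_mul, int_exp_decay hb]

lemma core {c b : ℝ} (hc : 0 < c) (hb : 0 ≤ b) :
    (Real.sqrt 2/2 - 4*Real.exp (-(π/4))/π)/(1+4/π) * ∫ s in Set.Ioi (0:ℝ), Real.exp (-(c*s^2+b*s))
      ≤ ∫ s in Set.Ioi (0:ℝ), Real.exp (-(c*s^2+b*s)) * Real.cos (b*s) := by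
  have hpi := Real.pi_pos
  have hk := numeric_k
  have hJnn : (0:ℝ) ≤ ∫ s in Set.Ioi (0:ℝ), Real.exp (-(c*s^2+b*s)) :=
    setIntegral_nonneg measurableSet_Ioi (fun s _ => (Real.exp_pos _).le)
  rcases eq_or_lt_of_le hb with hb0 | hb
  · -- b = 0 : cos factor is 1
    have : ∀ s : ℝ, Real.exp (-(c*s^2+b*s)) * Real.cos (b*s) = Real.exp (-(c*s^2+b*s)) := by
      intro s; rw [← hb0]; simp
    rw [funext this]
    have hk1 : (Real.sqrt 2/2 - 4*Real.exp (-(π/4))/π)/(1+4/π) ≤ 1 := by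
      rw [div_le_one (by positivity)]
      have h2 : Real.sqrt 2 ≤ 2 := by
        nlinarith [Real.sq_sqrt (by norm_num : (0:ℝ) ≤ 2), Real.sqrt_nonneg 2]
      have := Real.exp_pos (-(π/4))
      have h3 : (0:ℝ) < 4/π := by positivity
      have h4 : (0:ℝ) < 4*Real.exp (-(π/4))/π := by positivity
      linarith
    nlinarith
  -- b > 0
  set s1 := π/(4*b) with hs1def
  have hs1 : 0 < s1 := by positivity
  have hbs1 : b * s1 = π/4 := by rw [hs1def]; field_simp
  set g : ℝ → ℝ := fun s => Real.exp (-(c*s^2+b*s)) with hg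
  have hgint : IntegrableOn g (Set.Ioi 0) := g_integrable hc hb.le
  have hgcint : IntegrableOn (fun s => g s * Real.cos (b*s)) (Set.Ioi 0) := gcos_integrable hc hb.le
  set E := Real.exp (-(c*s1^2+π/4)) with hE
  -- split of J
  have hsplitJ : ∫ s in Set.Ioi (0:ℝ), g s
      = (∫ s in Set.Ioc (0:ℝ) s1, g s) + ∫ s in Set.Ioi s1, g s := by
    rw [← setIntegral_union (Set.Ioc_disjoint_Ioi le_rfl) measurableSet_Ioi
      (hgint.mono_set Set.Ioc_subset_Ioi_self) (hgint.mono_set (Set.Ioi_subset_Ioi hs1.le)),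
      Set.Ioc_union_Ioi_eq_Ioi hs1.le]
  -- lower bound for P
  have hP : s1 * E ≤ ∫ s in Set.Ioc (0:ℝ) s1, g s := by
    have h1 : ∫ s in Set.Ioc (0:ℝ) s1, E = s1 * E := by
      simp [Real.volume_Ioc, ENNReal.toReal_ofReal hs1.le, hs1.le]
    rw [← h1]
    apply setIntegral_mono_on (integrableOn_const measure_Ioc_lt_top.ne)
      (hgint.mono_set Set.Ioc_subset_Ioi_self) measurableSet_Ioc
    intro s hs
    rw [hE, hg, Real.exp_le_exp, ← hbs1]
    have h2 := hs.1.le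
    have h3 := hs.2
    nlinarith [mul_nonneg (sub_nonneg.mpr h3) (by linarith : (0:ℝ) ≤ s + s1)]
  have hPnn : (0:ℝ) < s1 * E := by positivity
  have hPpos : (0:ℝ) ≤ ∫ s in Set.Ioc (0:ℝ) s1, g s := le_trans hPnn.le hP
  -- tail bounds
  have hT1 : ∫ s in Set.Ioi s1, g s ≤ E/b := by
    have := tail_bound hc hb (le_of_lt hs1) (c := c)
    calc ∫ s in Set.Ioi s1, g s ≤ Real.exp (-(c*s1^2)) * (Real.exp (-(b*s1))/b) := this
      _ = E/b := by
          rw [hE, hbs1, show -(c*s1^2+π/4) = -(c*s1^2) + -(π/4) by ring, Real.exp_add]; ring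
  have hT2 : ∫ s in Set.Ioi (2*s1), g s ≤ Real.exp (-(π/4)) * (E/b) := by
    calc ∫ s in Set.Ioi (2*s1), g s
        ≤ Real.exp (-(c*(2*s1)^2)) * (Real.exp (-(b*(2*s1)))/b) :=
          tail_bound hc hb (by positivity)
      _ ≤ Real.exp (-(π/4)) * (E/b) := by
          have e1 : Real.exp (-(c*(2*s1)^2)) ≤ Real.exp (-(c*s1^2)) := by
            rw [Real.exp_le_exp]; nlinarith
          have e2 : Real.exp (-(b*(2*s1))) = Real.exp (-(π/4)) * Real.exp (-(π/4)) := by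
            rw [← Real.exp_add]; congr 1
            have h5 : b*(2*s1) = 2*(b*s1) := by ring
            rw [h5, hbs1]; ring
          have e3 : E = Real.exp (-(c*s1^2)) * Real.exp (-(π/4)) := by
            rw [hE, ← Real.exp_add]; congr 1; ring
          rw [e2, e3]
          have hep := Real.exp_pos (-(π/4))
          have e4 : Real.exp (-(c*(2*s1)^2)) * (Real.exp (-(π/4)) * Real.exp (-(π/4))/b)
              = Real.exp (-(π/4)) * (Real.exp (-(c*(2*s1)^2)) * Real.exp (-(π/4))/b) := by ring
          rw [e4]
          gcongr
  -- split of G at s1 and 2*s1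
  have h2s1 : Set.Ioi s1 = Set.Ioc s1 (2*s1) ∪ Set.Ioi (2*s1) :=
    (Set.Ioc_union_Ioi_eq_Ioi (by linarith)).symm
  have hsplitG : ∫ s in Set.Ioi (0:ℝ), g s * Real.cos (b*s)
      = (∫ s in Set.Ioc (0:ℝ) s1, g s * Real.cos (b*s))
        + ((∫ s in Set.Ioc s1 (2*s1), g s * Real.cos (b*s))
          + ∫ s in Set.Ioi (2*s1), g s * Real.cos (b*s)) := by
    rw [← setIntegral_union (Set.Ioc_disjoint_Ioi le_rfl) measurableSet_Ioi
      (hgcint.mono_set (Set.Ioc_subset_Ioi_self.trans (Set.Ioi_subset_Ioi hs1.le)))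
      (hgcint.mono_set (Set.Ioi_subset_Ioi (by linarith))), ← h2s1,
      ← setIntegral_union (Set.Ioc_disjoint_Ioi le_rfl) measurableSet_Ioi
      (hgcint.mono_set Set.Ioc_subset_Ioi_self) (hgcint.mono_set (Set.Ioi_subset_Ioi hs1.le)),
      Set.Ioc_union_Ioi_eq_Ioi hs1.le]
  -- lower bounds for the three pieces of G
  have hG1 : (Real.sqrt 2/2) * (∫ s in Set.Ioc (0:ℝ) s1, g s)
      ≤ ∫ s in Set.Ioc (0:ℝ) s1, g s * Real.cos (b*s) := by
    rw [← integral_const_mul]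
    apply setIntegral_mono_on ((hgint.mono_set Set.Ioc_subset_Ioi_self).const_mul _)
      (hgcint.mono_set Set.Ioc_subset_Ioi_self) measurableSet_Ioc
    intro s hs
    have h0 : 0 ≤ b*s := mul_nonneg hb.le hs.1.le
    have h4 : b*s ≤ π/4 := by rw [← hbs1]; exact mul_le_mul_of_nonneg_left hs.2 hb.le
    have hcos : Real.sqrt 2/2 ≤ Real.cos (b*s) := by
      rw [← Real.cos_pi_div_four]
      exact Real.cos_le_cos_of_nonneg_of_le_pi h0 (by linarith) h4
    calc Real.sqrt 2/2 * g s ≤ Real.cos (b*s) * g s :=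
          mul_le_mul_of_nonneg_right hcos (Real.exp_pos _).le
      _ = g s * Real.cos (b*s) := mul_comm _ _
  have hG2 : 0 ≤ ∫ s in Set.Ioc s1 (2*s1), g s * Real.cos (b*s) := by
    apply setIntegral_nonneg measurableSet_Ioc
    intro s hs
    apply mul_nonneg (Real.exp_pos _).le
    apply Real.cos_nonneg_of_mem_Icc
    constructor
    · have hspos : (0:ℝ) < s := lt_trans hs1 hs.1
      have : 0 ≤ b*s := mul_nonneg hb.le hspos.le
      linarith
    · calc b*s ≤ b*(2*s1) := mul_le_mul_of_nonneg_left hs.2 hb.le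
        _ = π/2 := by rw [show b*(2*s1) = 2*(b*s1) by ring, hbs1]; ring
  have hG3 : -(Real.exp (-(π/4)) * (E/b)) ≤ ∫ s in Set.Ioi (2*s1), g s * Real.cos (b*s) := by
    have hstep : -(∫ s in Set.Ioi (2*s1), g s) ≤ ∫ s in Set.Ioi (2*s1), g s * Real.cos (b*s) := by
      rw [← integral_neg]
      apply setIntegral_mono_on ((hgint.mono_set (Set.Ioi_subset_Ioi (by linarith))).neg)
        (hgcint.mono_set (Set.Ioi_subset_Ioi (by linarith))) measurableSet_Ioi
      intro s _
      have hc1 := Real.neg_one_le_cos (b*s)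
      have hgpos : 0 < g s := Real.exp_pos _
      simp only [Pi.neg_apply]
      nlinarith [hc1, hgpos]
    linarith
  -- combine everything
  have h4pi : (0:ℝ) < 4/π := by positivity
  have hEb : E/b = (4/π) * (s1*E) := by rw [hs1def]; field_simp
  set P := ∫ s in Set.Ioc (0:ℝ) s1, g s with hPdef
  have hsE : (4/π) * (s1*E) ≤ (4/π) * P := mul_le_mul_of_nonneg_left hP h4pi.le
  have hJP : ∫ s in Set.Ioi (0:ℝ), g s ≤ (1+4/π) * P := by
    rw [hsplitJ]
    have : ∫ s in Set.Ioi s1, g s ≤ (4/π) * P := by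
      calc ∫ s in Set.Ioi s1, g s ≤ E/b := hT1
        _ = (4/π) * (s1*E) := hEb
        _ ≤ (4/π) * P := hsE
    linarith
  have hGlb : (Real.sqrt 2/2) * P - Real.exp (-(π/4)) * ((4/π) * P)
      ≤ ∫ s in Set.Ioi (0:ℝ), g s * Real.cos (b*s) := by
    rw [hsplitG]
    have h6 : Real.exp (-(π/4)) * (E/b) ≤ Real.exp (-(π/4)) * ((4/π)*P) := by
      rw [hEb]
      exact mul_le_mul_of_nonneg_left hsE (Real.exp_pos _).le
    linarith
  set k := Real.sqrt 2/2 - 4*Real.exp (-(π/4))/π with hkdef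
  have hkpi : 0 < 1+4/π := by linarith
  have hknn : 0 ≤ k/(1+4/π) := by positivity
  calc k/(1+4/π) * ∫ s in Set.Ioi (0:ℝ), g s ≤ k/(1+4/π) * ((1+4/π) * P) :=
        mul_le_mul_of_nonneg_left hJP hknn
    _ = k * P := by field_simp
    _ = (Real.sqrt 2/2) * P - Real.exp (-(π/4)) * ((4/π) * P) := by rw [hkdef]; ring
    _ ≤ _ := hGlb

lemma he4 : e4 = (↑(Real.sqrt 2/2) : ℂ) + ↑(Real.sqrt 2/2)*Complex.I := by
  rw [e4, mul_comm, Complex.exp_mul_I]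
  rw [← Complex.ofReal_cos, ← Complex.ofReal_sin]
  rw [Real.cos_pi_div_four, Real.sin_pi_div_four]

lemma he4sq : e4^2 = Complex.I := by
  rw [e4, ← Complex.exp_nat_mul]
  rw [show (2:ℕ) * (Complex.I * (↑(π/4):ℂ)) = Complex.I * ↑(π/2) by push_cast; ring]
  rw [mul_comm, Complex.exp_mul_I]
  push_cast
  rw [show (↑π/2 : ℂ) = ((π/2 : ℝ) : ℂ) by push_cast; ring]
  rw [← Complex.ofReal_cos, ← Complex.ofReal_sin, Real.cos_pi_div_two, Real.sin_pi_div_two]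
  simp

lemma habs_e4 : ‖e4‖ = 1 := by
  rw [e4, Complex.norm_exp]
  simp

lemma exponent_eq (c a s : ℝ) :
    Complex.I * ↑c * (((s:ℂ)*e4)^2 + ↑a*((s:ℂ)*e4))
      = ((-(c*s^2 + c*a*(Real.sqrt 2/2)*s) : ℝ) : ℂ) + ((c*a*(Real.sqrt 2/2)*s : ℝ) : ℂ)*Complex.I := by
  have h1 : ((s:ℂ)*e4)^2 = (s:ℂ)^2*Complex.I := by rw [mul_pow, he4sq]
  rw [h1, he4]
  apply Complex.ext <;>
    simp [Complex.mul_re, Complex.mul_im, Complex.add_re, Complex.add_im,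
      Complex.ofReal_pow] <;> ring

end Stmt7Aux

open Stmt7Aux Set Real in
/-- `|Φ(r e^{iπ/4})| ≤ C₁·|Φ(0)|` uniformly in `t`, `Λ` and `r`. -/
theorem stmt_7 (δ : ℝ) (hδ0 : 0 < δ) (hδ1 : δ < 1) :
    ∃ C₁ > 0, ∀ t Λ : ℝ, 1 < t → 0 ≤ Λ → Λ ≤ (t ^ (1 - δ) - 1) / lamc δ t - 1 →
      ∀ r : ℝ, 0 < r →
        ‖Phi δ t Λ ((r : ℂ) * e4)‖ ≤ C₁ * ‖Phi δ t Λ 0‖ := by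
  have hk := numeric_k
  have hpi := Real.pi_pos
  have hkpi : (0:ℝ) < 1 + 4/π := by positivity
  set k := Real.sqrt 2/2 - 4*Real.exp (-(π/4))/π with hkdef
  refine ⟨(1+4/π)/k, by positivity, ?_⟩
  intro t Λ ht hΛ _ r hr
  -- basic positivity facts
  have ht0 : (0:ℝ) < t := by linarith
  have htp : t ^ (δ-1) < 1 := Real.rpow_lt_one_of_one_lt_of_neg ht (by linarith)
  have htpp : 0 < t ^ (δ-1) := Real.rpow_pos_of_pos ht0 _
  have hlam : 0 < lamc δ t := div_pos htpp (by linarith)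
  set c := lamc δ t * t / 2 with hcdef
  have hc : 0 < c := by rw [hcdef]; positivity
  set a := 2 * Real.log (1 + Λ) / (1 + lamc δ t) with hadef
  have ha : 0 ≤ a := by
    rw [hadef]
    apply div_nonneg _ (by linarith)
    have := Real.log_nonneg (by linarith : (1:ℝ) ≤ 1 + Λ)
    linarith
  set b := c*a*(Real.sqrt 2/2) with hbdef
  have hb : 0 ≤ b := by
    rw [hbdef]
    have := Real.sqrt_nonneg 2
    positivity
  -- the phase along the ray
  have hphase : ∀ s : ℝ, phase δ t Λ ((s:ℂ)*e4)
      = Complex.exp (((-(c*s^2+b*s) : ℝ) : ℂ) + ((b*s : ℝ):ℂ)*Complex.I) := by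
    intro s
    rw [phase, ← hcdef, ← hadef, exponent_eq, ← hbdef]
  have hre : ∀ s : ℝ, (phase δ t Λ ((s:ℂ)*e4)).re
      = Real.exp (-(c*s^2+b*s)) * Real.cos (b*s) := by
    intro s
    rw [hphase s, Complex.exp_re]
    simp [← Complex.ofReal_pow]
  have habs : ∀ s : ℝ, ‖phase δ t Λ ((s:ℂ)*e4)‖ = Real.exp (-(c*s^2+b*s)) := by
    intro s
    rw [hphase s, Complex.norm_exp]
    simp [← Complex.ofReal_pow]
  -- integrability
  have hcont1 : Continuous fun s : ℝ => -(c*s^2+b*s) := by fun_prop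
  have hcont2 : Continuous fun s : ℝ => b*s := by fun_prop
  have hcont : Continuous (fun s : ℝ => phase δ t Λ ((s:ℂ)*e4)) := by
    have : (fun s : ℝ => phase δ t Λ ((s:ℂ)*e4))
        = fun s : ℝ => Complex.exp (((-(c*s^2+b*s) : ℝ) : ℂ) + ((b*s : ℝ):ℂ)*Complex.I) :=
      funext hphase
    rw [this]
    apply Complex.continuous_exp.comp
    apply Continuous.add
    · exact Complex.continuous_ofReal.comp hcont1
    · exact (Complex.continuous_ofReal.comp hcont2).mul continuous_const
  have hpint : IntegrableOn (fun s : ℝ => phase δ t Λ ((s:ℂ)*e4)) (Set.Ioi 0) := by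
    apply Integrable.mono' (g_integrable hc hb) hcont.aestronglyMeasurable.restrict
    filter_upwards with s
    rw [habs s]
  -- upper bound for |Phi(r e4)|
  have hgr : IntegrableOn (fun s => Real.exp (-(c*(r+s)^2+b*(r+s)))) (Set.Ioi 0) := by
    apply Integrable.mono' (g_integrable hc hb)
    · have hadd : Continuous fun s : ℝ => r + s := continuous_const.add continuous_id
      have : Continuous fun s : ℝ => -(c*(r+s)^2+b*(r+s)) := by fun_prop
      exact (Real.continuous_exp.comp this).aestronglyMeasurable.restrict
    · rw [ae_restrict_iff' measurableSet_Ioi]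
      filter_upwards with s hs
      have hs0 : (0:ℝ) ≤ s := (Set.mem_Ioi.mp hs).le
      rw [Real.norm_eq_abs, abs_of_pos (Real.exp_pos _), Real.exp_le_exp]
      nlinarith [mul_nonneg hb hr.le, mul_nonneg (mul_nonneg hc.le hr.le) hs0,
        mul_nonneg (mul_nonneg hc.le hr.le) hr.le]
  have hupper : ‖Phi δ t Λ ((r:ℂ)*e4)‖
      ≤ ∫ s in Set.Ioi (0:ℝ), Real.exp (-(c*s^2+b*s)) := by
    have hPhir : Phi δ t Λ ((r:ℂ)*e4) = ∫ s in Set.Ioi (0:ℝ), e4 * phase δ t Λ ((((r+s):ℝ):ℂ)*e4) := by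
      rw [Phi]
      congr 1
      funext s
      congr 2
      push_cast
      ring
    rw [hPhir]
    calc ‖∫ s in Set.Ioi (0:ℝ), e4 * phase δ t Λ ((((r+s):ℝ):ℂ)*e4)‖
        ≤ ∫ s in Set.Ioi (0:ℝ), ‖e4 * phase δ t Λ ((((r+s):ℝ):ℂ)*e4)‖ :=
          norm_integral_le_integral_norm _
      _ = ∫ s in Set.Ioi (0:ℝ), Real.exp (-(c*(r+s)^2+b*(r+s))) := by
          congr 1
          funext s
          rw [norm_mul, habs_e4, one_mul, habs (r+s)]
      _ ≤ ∫ s in Set.Ioi (0:ℝ), Real.exp (-(c*s^2+b*s)) := by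
          apply setIntegral_mono_on hgr (g_integrable hc hb) measurableSet_Ioi
          intro s hs
          have hs0 : (0:ℝ) ≤ s := (Set.mem_Ioi.mp hs).le
          rw [Real.exp_le_exp]
          nlinarith [mul_nonneg hb hr.le, mul_nonneg (mul_nonneg hc.le hr.le) hs0,
            mul_nonneg (mul_nonneg hc.le hr.le) hr.le]
  -- lower bound for |Phi(0)|
  have hPhi0 : (starRingEnd ℂ) e4 * Phi δ t Λ 0 = ∫ s in Set.Ioi (0:ℝ), phase δ t Λ ((s:ℂ)*e4) := by
    rw [Phi, ← integral_const_mul]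
    congr 1
    funext s
    rw [zero_add, ← mul_assoc]
    rw [mul_comm ((starRingEnd ℂ) e4) e4, Complex.mul_conj]
    rw [show Complex.normSq e4 = 1 by rw [← Complex.sq_norm, habs_e4]; norm_num]
    simp
  have hlower : (∫ s in Set.Ioi (0:ℝ), Real.exp (-(c*s^2+b*s)) * Real.cos (b*s))
      ≤ ‖Phi δ t Λ 0‖ := by
    have h1 : ((starRingEnd ℂ) e4 * Phi δ t Λ 0).re
        = ∫ s in Set.Ioi (0:ℝ), Real.exp (-(c*s^2+b*s)) * Real.cos (b*s) := by
      rw [hPhi0, ← RCLike.re_eq_complex_re, ← integral_re hpint]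
      congr 1
      funext s
      rw [RCLike.re_eq_complex_re]
      exact hre s
    calc (∫ s in Set.Ioi (0:ℝ), Real.exp (-(c*s^2+b*s)) * Real.cos (b*s))
        = ((starRingEnd ℂ) e4 * Phi δ t Λ 0).re := h1.symm
      _ ≤ ‖(starRingEnd ℂ) e4 * Phi δ t Λ 0‖ := Complex.re_le_norm _
      _ = ‖Phi δ t Λ 0‖ := by
          rw [norm_mul, Complex.norm_conj, habs_e4, one_mul]
  -- conclude via the core inequality
  have hcore := core hc hb
  rw [← hkdef] at hcore
  have hkpos : 0 < k/(1+4/π) := by positivity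
  have hJle : (∫ s in Set.Ioi (0:ℝ), Real.exp (-(c*s^2+b*s)))
      ≤ (1+4/π)/k * ‖Phi δ t Λ 0‖ := by
    rw [show (1+4/π)/k = (k/(1+4/π))⁻¹ by rw [inv_div]]
    calc (∫ s in Set.Ioi (0:ℝ), Real.exp (-(c*s^2+b*s)))
        = (k/(1+4/π))⁻¹ * (k/(1+4/π) * (∫ s in Set.Ioi (0:ℝ), Real.exp (-(c*s^2+b*s)))) := by
          rw [← mul_assoc, inv_mul_cancel₀ (ne_of_gt hkpos), one_mul]
      _ ≤ (k/(1+4/π))⁻¹ * ‖Phi δ t Λ 0‖ := by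
          apply mul_le_mul_of_nonneg_left _ (inv_nonneg.mpr hkpos.le)
          exact le_trans hcore hlower
  calc ‖Phi δ t Λ ((r:ℂ)*e4)‖ ≤ _ := hupper
    _ ≤ (1+4/π)/k * ‖Phi δ t Λ 0‖ := hJle
end
end

section
/- For all real numbers a ≥ 0 and ω ≥ 0, |∫ e^{iξ²} dξ|, where the integral is taken over the straight segment from ω to ω + a·e^{iπ/4}, is at most e^{ω²/2}·∫_{ω/√2}^{∞} e^{−p²} dp. -/
open MeasureTheory

noncomputable section

lemma he4 : e4 = Complex.ofReal (Real.sqrt 2 / 2) + Complex.ofReal (Real.sqrt 2 / 2) * Complex.I := by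
  rw [e4, mul_comm, Complex.exp_mul_I, ← Complex.ofReal_cos, ← Complex.ofReal_sin,
    Real.cos_pi_div_four, Real.sin_pi_div_four]

/-- bound on the Fresnel integral over the segment from `ω` to `ω + a·e^{iπ/4}`. -/
theorem stmt_8 (a ω : ℝ) (ha : 0 ≤ a) (hω : 0 ≤ ω) :
    ‖(∫ s in (0 : ℝ)..a, e4 * Complex.exp (Complex.I * ((ω : ℂ) + (s : ℂ) * e4) ^ 2))‖ ≤
      Real.exp (ω ^ 2 / 2) * ∫ p in Set.Ioi (ω / Real.sqrt 2), Real.exp (-p ^ 2) := by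
  have h2 : Real.sqrt 2 * Real.sqrt 2 = 2 := Real.mul_self_sqrt (by norm_num)
  have h2pos : (0:ℝ) < Real.sqrt 2 := by positivity
  set c := ω / Real.sqrt 2 with hc
  have hnorm : ∀ s : ℝ,
      ‖e4 * Complex.exp (Complex.I * ((ω : ℂ) + (s : ℂ) * e4) ^ 2)‖
        = Real.exp (ω ^ 2 / 2) * Real.exp (-((s + c) ^ 2)) := by
    intro s
    have hre : (Complex.I * ((ω : ℂ) + (s : ℂ) * e4) ^ 2).re = -s^2 - Real.sqrt 2 * ω * s := by
      simp [he4, Complex.mul_re, Complex.mul_im, pow_two]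
      ring_nf
      nlinarith [h2]
    have he4n : ‖e4‖ = 1 := by
      rw [e4]
      simp [Complex.norm_exp]
    rw [norm_mul, he4n, one_mul, Complex.norm_exp, hre,
      ← Real.exp_add]
    congr 1
    have : c ^ 2 = ω ^ 2 / 2 := by
      rw [hc, div_pow, Real.sq_sqrt (by norm_num : (2:ℝ) ≥ 0)]
    have hcs : Real.sqrt 2 * ω * s = 2 * s * c := by
      rw [hc]; field_simp; linear_combination ω * s * h2
    nlinarith [this, hcs]
  calc ‖(∫ s in (0:ℝ)..a, e4 * Complex.exp (Complex.I * ((ω : ℂ) + (s : ℂ) * e4) ^ 2))‖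
      ≤ ∫ s in (0:ℝ)..a, ‖e4 * Complex.exp (Complex.I * ((ω : ℂ) + (s : ℂ) * e4) ^ 2)‖ :=
        intervalIntegral.norm_integral_le_integral_norm ha
    _ = ∫ s in (0:ℝ)..a, Real.exp (ω ^ 2 / 2) * Real.exp (-((s + c) ^ 2)) := by
        simp_rw [hnorm]
    _ = Real.exp (ω ^ 2 / 2) * ∫ s in (0:ℝ)..a, Real.exp (-((s + c) ^ 2)) := by
        rw [intervalIntegral.integral_const_mul]
    _ = Real.exp (ω ^ 2 / 2) * ∫ p in (0+c)..(a+c), Real.exp (-(p ^ 2)) := by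
        rw [intervalIntegral.integral_comp_add_right (fun p => Real.exp (-(p^2))) c]
    _ ≤ Real.exp (ω ^ 2 / 2) * ∫ p in Set.Ioi c, Real.exp (-p ^ 2) := by
        gcongr Real.exp (ω ^ 2 / 2) * ?_
        rw [zero_add, intervalIntegral.integral_of_le (by linarith)]
        have hint : IntegrableOn (fun p : ℝ => Real.exp (-p ^ 2)) (Set.Ioi c) := by
          have := integrable_exp_neg_mul_sq (show (0:ℝ) < 1 by norm_num)
          simpa using this.integrableOn
        apply setIntegral_mono_set hint
        · filter_upwards with x using Real.exp_nonneg _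
        · exact HasSubset.Subset.eventuallyLE Set.Ioc_subset_Ioi_self
end
end

section
/- Fix 0 < δ < 1. There exists t₀ > 0, depending only on δ, such that for all t ≥ t₀, all k with 0 < k < t^{δ−1}, all λ with t^{δ−1}/(1−t^{δ−1}) ≤ λ ≤ t^{1−δ}−1, and all φ with 0 < φ < π/2 (and additionally φ < arctan(π/|ln λ|) if λ < 1), the following holds: for every R ≥ 0, with z := 1−k+R e^{iφ}, |Log z − Log(k − R e^{iφ}) + ln λ| > min(π/2 − φ, ln(t^{δ−1}/k)); moreover there exists R₀ ≥ 0 such that for all R ≥ R₀ one has |Log z − Log(k − R e^{iφ}) + ln λ| > π/2 − φ. -/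
noncomputable section

namespace Stmt12Aux

open Real

lemma sq_lt_aux {c s R K B : ℝ} (hc : 0 < c) (hs : 0 < s) (hR : 0 < R) (hB : 0 < B)
    (hK : 0 < K) (hsc : s ^ 2 + c ^ 2 = 1) (hB2 : B ^ 2 = K ^ 2 + (R * s) ^ 2)
    (hq : K * c < R * s * s) : c * B < R * s := by
  have h1 : (c * B) ^ 2 < (R * s) ^ 2 := by nlinarith [mul_pos hK hc, mul_pos (mul_pos hR hs) hs]
  nlinarith [mul_pos hc hB, mul_pos hR hs]

set_option maxHeartbeats 1000000 in
lemma key (k lam φ R : ℝ) (hk0 : 0 < k) (hk1 : k < 1) (hlam : 0 < lam)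
    (hφ0 : 0 < φ) (hφ2 : φ < Real.pi / 2) (hR : 0 ≤ R) :
    Real.pi / 2 - φ <
        Norm.norm
          (Complex.log (((1 - k : ℝ) : ℂ) + (R : ℂ) * Complex.exp (Complex.I * (φ : ℂ))) -
            Complex.log ((k : ℂ) - (R : ℂ) * Complex.exp (Complex.I * (φ : ℂ))) +
            (Real.log lam : ℂ)) ∨
      Real.log lam + (Real.log (1 - k) - Real.log k) ≤
        Norm.norm
          (Complex.log (((1 - k : ℝ) : ℂ) + (R : ℂ) * Complex.exp (Complex.I * (φ : ℂ))) -
            Complex.log ((k : ℂ) - (R : ℂ) * Complex.exp (Complex.I * (φ : ℂ))) +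
            (Real.log lam : ℂ)) := by
  have hc : 0 < Real.cos φ := Real.cos_pos_of_mem_Ioo ⟨by linarith [Real.pi_pos], hφ2⟩
  have hs : 0 < Real.sin φ :=
    Real.sin_pos_of_pos_of_lt_pi hφ0 (by linarith [Real.pi_pos])
  set E : ℂ := Complex.exp (Complex.I * (φ : ℂ)) with hE
  have hEre : E.re = Real.cos φ := by rw [hE, mul_comm]; exact Complex.exp_ofReal_mul_I_re φ
  have hEim : E.im = Real.sin φ := by rw [hE, mul_comm]; exact Complex.exp_ofReal_mul_I_im φ
  set a : ℂ := ((1 - k : ℝ) : ℂ) + (R : ℂ) * E with ha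
  set b : ℂ := (k : ℂ) - (R : ℂ) * E with hb
  set W : ℂ := Complex.log a - Complex.log b + (Real.log lam : ℂ) with hW
  have hare : a.re = 1 - k + R * Real.cos φ := by
    simp [ha, Complex.add_re, Complex.mul_re, hEre, hEim]
  have haim : a.im = R * Real.sin φ := by
    simp [ha, Complex.add_im, Complex.mul_im, hEre, hEim]
  have hbre : b.re = k - R * Real.cos φ := by
    simp [hb, Complex.sub_re, Complex.mul_re, hEre, hEim]
  have hbim : b.im = -(R * Real.sin φ) := by
    simp [hb, Complex.sub_im, Complex.mul_im, hEre, hEim]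
  have hWim : W.im = a.arg - b.arg := by
    simp [hW, Complex.add_im, Complex.sub_im, Complex.log_im]
  have hWre : W.re = Real.log (Norm.norm a) - Real.log (Norm.norm b) + Real.log lam := by
    simp [hW, Complex.add_re, Complex.sub_re, Complex.log_re]
  have harga : 0 ≤ a.arg := Complex.arg_nonneg_iff.mpr (by rw [haim]; positivity)
  have habsW_im : W.im ≤ Norm.norm W :=
    (le_abs_self _).trans (Complex.abs_im_le_norm W)
  have habsW_re : W.re ≤ Norm.norm W :=
    (le_abs_self _).trans (Complex.abs_re_le_norm W)
  have hB2 : (Norm.norm b) ^ 2 = (k - R * Real.cos φ) ^ 2 + (R * Real.sin φ) ^ 2 := by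
    rw [Complex.sq_norm, Complex.normSq_apply, hbre, hbim]; ring
  by_cases hcase : R ≤ k * Real.cos φ
  · -- real-part bound
    right
    have hbre_pos : 0 < b.re := by
      rw [hbre]
      nlinarith [Real.sin_sq_add_cos_sq φ, mul_nonneg (sub_nonneg.mpr hcase) hc.le,
        mul_pos hk0 (mul_pos hs hs)]
    have habs_b_pos : 0 < Norm.norm b :=
      lt_of_lt_of_le hbre_pos ((le_abs_self _).trans (Complex.abs_re_le_norm b))
    have habs_b_le : Norm.norm b ≤ k := by
      have h2k : 0 ≤ 2 * k * Real.cos φ - R := by nlinarith [mul_pos hk0 hc]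
      have hB2' : Norm.norm b ^ 2 = k ^ 2 - 2 * k * R * Real.cos φ + R ^ 2 := by
        have h := Real.sin_sq_add_cos_sq φ
        linear_combination hB2 + R ^ 2 * h
      have hle2 : Norm.norm b ^ 2 ≤ k ^ 2 := by
        nlinarith [mul_nonneg hR h2k]
      nlinarith [norm_nonneg b]
    have habs_a : 1 - k ≤ Norm.norm a := by
      have h1 : 1 - k ≤ a.re := by rw [hare]; nlinarith
      exact h1.trans ((le_abs_self _).trans (Complex.abs_re_le_norm a))
    have h1 : Real.log (1 - k) ≤ Real.log (Norm.norm a) :=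
      Real.log_le_log (by linarith) habs_a
    have h2 : Real.log (Norm.norm b) ≤ Real.log k :=
      Real.log_le_log habs_b_pos habs_b_le
    calc Real.log lam + (Real.log (1 - k) - Real.log k) ≤ W.re := by
          rw [hWre]; linarith
      _ ≤ Norm.norm W := habsW_re
  · -- imaginary-part bound
    left
    push_neg at hcase
    have hRpos : 0 < R := lt_of_le_of_lt (by positivity) hcase
    have hbim_neg : b.im < 0 := by rw [hbim]; nlinarith
    have hargb : b.arg < -(Real.pi / 2 - φ) := by
      rcases lt_trichotomy b.re 0 with h | h | h
      · have h1 := Complex.arg_of_re_neg_of_im_neg h hbim_neg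
        have h2 := Real.arcsin_le_pi_div_two ((-b).im / Norm.norm b)
        rw [h1]; linarith
      · have h1 : b.arg = -(Real.pi / 2) :=
          Complex.arg_eq_neg_pi_div_two_iff.mpr ⟨h, hbim_neg⟩
        rw [h1]; linarith
      · have habs_b_pos : 0 < Norm.norm b :=
          lt_of_lt_of_le h ((le_abs_self _).trans (Complex.abs_re_le_norm b))
        have harg := Complex.arg_of_re_nonneg (x := b) h.le
        have him_le : R * Real.sin φ ≤ Norm.norm b := by
          have := Complex.abs_im_le_norm b
          rw [hbim, abs_neg, abs_of_nonneg (by positivity)] at this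
          exact this
        have hq : (k - R * Real.cos φ) * Real.cos φ < R * Real.sin φ * Real.sin φ := by
          nlinarith [Real.sin_sq_add_cos_sq φ]
        have hbre' : 0 < k - R * Real.cos φ := by rw [hbre] at h; exact h
        have key3 : Real.cos φ < R * Real.sin φ / Norm.norm b := by
          rw [lt_div_iff₀ habs_b_pos]
          have := sq_lt_aux hc hs hRpos habs_b_pos hbre' (Real.sin_sq_add_cos_sq φ) hB2 hq
          linarith
        have hmem1 : Real.cos φ ∈ Set.Icc (-1 : ℝ) 1 :=
          ⟨Real.neg_one_le_cos φ, Real.cos_le_one φ⟩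
        have hmem2 : R * Real.sin φ / Norm.norm b ∈ Set.Icc (-1 : ℝ) 1 := by
          constructor
          · have : (0 : ℝ) ≤ R * Real.sin φ / Norm.norm b := by positivity
            linarith
          · exact (div_le_one habs_b_pos).mpr him_le
        have hmono := Real.strictMonoOn_arcsin hmem1 hmem2 key3
        have hcosval : Real.arcsin (Real.cos φ) = Real.pi / 2 - φ := by
          rw [Real.arcsin_eq_pi_div_two_sub_arccos,
            Real.arccos_cos hφ0.le (by linarith [Real.pi_pos])]
        have hargval : b.arg = -Real.arcsin (R * Real.sin φ / Norm.norm b) := by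
          rw [harg, hbim, neg_div, Real.arcsin_neg]
        rw [hargval]
        rw [hcosval] at hmono
        linarith
    have h3 : Real.pi / 2 - φ < W.im := by rw [hWim]; linarith
    exact h3.trans_le habsW_im

lemma key2 (k lam φ R : ℝ) (hk0 : 0 < k)
    (hφ0 : 0 < φ) (hφ2 : φ < Real.pi / 2) (hR : k / Real.cos φ < R) :
    Real.pi / 2 - φ <
      Norm.norm
        (Complex.log (((1 - k : ℝ) : ℂ) + (R : ℂ) * Complex.exp (Complex.I * (φ : ℂ))) -
          Complex.log ((k : ℂ) - (R : ℂ) * Complex.exp (Complex.I * (φ : ℂ))) +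
          (Real.log lam : ℂ)) := by
  have hc : 0 < Real.cos φ := Real.cos_pos_of_mem_Ioo ⟨by linarith [Real.pi_pos], hφ2⟩
  have hs : 0 < Real.sin φ :=
    Real.sin_pos_of_pos_of_lt_pi hφ0 (by linarith [Real.pi_pos])
  have hRpos : 0 < R := lt_of_le_of_lt (by positivity) hR
  set E : ℂ := Complex.exp (Complex.I * (φ : ℂ)) with hE
  have hEre : E.re = Real.cos φ := by rw [hE, mul_comm]; exact Complex.exp_ofReal_mul_I_re φ
  have hEim : E.im = Real.sin φ := by rw [hE, mul_comm]; exact Complex.exp_ofReal_mul_I_im φ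
  set a : ℂ := ((1 - k : ℝ) : ℂ) + (R : ℂ) * E with ha
  set b : ℂ := (k : ℂ) - (R : ℂ) * E with hb
  set W : ℂ := Complex.log a - Complex.log b + (Real.log lam : ℂ) with hW
  have haim : a.im = R * Real.sin φ := by
    simp [ha, Complex.add_im, Complex.mul_im, hEre, hEim]
  have hbre : b.re = k - R * Real.cos φ := by
    simp [hb, Complex.sub_re, Complex.mul_re, hEre, hEim]
  have hbim : b.im = -(R * Real.sin φ) := by
    simp [hb, Complex.sub_im, Complex.mul_im, hEre, hEim]
  have hWim : W.im = a.arg - b.arg := by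
    simp [hW, Complex.add_im, Complex.sub_im, Complex.log_im]
  have harga : 0 ≤ a.arg := Complex.arg_nonneg_iff.mpr (by rw [haim]; positivity)
  have hbre_neg : b.re < 0 := by
    rw [hbre]
    have : k < R * Real.cos φ := (div_lt_iff₀ hc).mp hR
    linarith
  have hbim_neg : b.im < 0 := by rw [hbim]; nlinarith
  have h1 := Complex.arg_of_re_neg_of_im_neg hbre_neg hbim_neg
  have h2 := Real.arcsin_le_pi_div_two ((-b).im / Norm.norm b)
  have h3 : Real.pi / 2 - φ < W.im := by rw [hWim, h1]; linarith
  exact h3.trans_le ((le_abs_self _).trans (Complex.abs_im_le_norm W))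

end Stmt12Aux

/-- lower bound for `|∂F/∂z|` along the contour `z = 1−k+Re^{iφ}`. -/
theorem stmt_12 (δ : ℝ) (hδ0 : 0 < δ) (hδ1 : δ < 1) :
    ∃ t₀ > 0, ∀ t ≥ t₀, ∀ k : ℝ, 0 < k → k < t ^ (δ - 1) →
      ∀ lam : ℝ, t ^ (δ - 1) / (1 - t ^ (δ - 1)) ≤ lam → lam ≤ t ^ (1 - δ) - 1 →
      ∀ φ : ℝ, 0 < φ → φ < Real.pi / 2 →
        (lam < 1 → φ < Real.arctan (Real.pi / |Real.log lam|)) →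
        (∀ R : ℝ, 0 ≤ R →
          min (Real.pi / 2 - φ) (Real.log (t ^ (δ - 1) / k)) <
            Norm.norm
              (Complex.log (((1 - k : ℝ) : ℂ) + (R : ℂ) * Complex.exp (Complex.I * (φ : ℂ))) -
                Complex.log ((k : ℂ) - (R : ℂ) * Complex.exp (Complex.I * (φ : ℂ))) +
                (Real.log lam : ℂ))) ∧
        ∃ R₀ : ℝ, 0 ≤ R₀ ∧ ∀ R ≥ R₀,
          Real.pi / 2 - φ <
            Norm.norm
              (Complex.log (((1 - k : ℝ) : ℂ) + (R : ℂ) * Complex.exp (Complex.I * (φ : ℂ))) -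
                Complex.log ((k : ℂ) - (R : ℂ) * Complex.exp (Complex.I * (φ : ℂ))) +
                (Real.log lam : ℂ)) := by
  refine ⟨2, by norm_num, ?_⟩
  intro t ht k hk0 hk1 lam hlam1 hlam2 φ hφ0 hφ2 _hextra
  have ht1 : (1 : ℝ) < t := by linarith
  have hT : t ^ (δ - 1) < 1 :=
    Real.rpow_lt_one_of_one_lt_of_neg ht1 (by linarith)
  have hTpos : 0 < t ^ (δ - 1) := Real.rpow_pos_of_pos (by linarith) _
  have hk1' : k < 1 := hk1.trans hT
  have hlam_pos : 0 < lam :=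
    lt_of_lt_of_le (div_pos hTpos (by linarith)) hlam1
  have hc : 0 < Real.cos φ := Real.cos_pos_of_mem_Ioo ⟨by linarith [Real.pi_pos], hφ2⟩
  constructor
  · intro R hR
    rcases Stmt12Aux.key k lam φ R hk0 hk1' hlam_pos hφ0 hφ2 hR with h | h
    · exact lt_of_le_of_lt (min_le_left _ _) h
    · refine lt_of_le_of_lt (min_le_right _ _) (lt_of_lt_of_le ?_ h)
      have hlog1 : Real.log (t ^ (δ - 1) / k) = Real.log (t ^ (δ - 1)) - Real.log k :=
        Real.log_div (ne_of_gt hTpos) (ne_of_gt hk0)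
      have hlog2 : Real.log (t ^ (δ - 1)) - Real.log (1 - t ^ (δ - 1)) ≤ Real.log lam := by
        have := Real.log_le_log (div_pos hTpos (by linarith)) hlam1
        rwa [Real.log_div (ne_of_gt hTpos) (by linarith)] at this
      have hlog3 : Real.log (1 - t ^ (δ - 1)) < Real.log (1 - k) :=
        Real.log_lt_log (by linarith) (by linarith)
      rw [hlog1]; linarith
  · refine ⟨k / Real.cos φ + 1, by positivity, ?_⟩
    intro R hR
    exact Stmt12Aux.key2 k lam φ R hk0 hφ0 hφ2 (by linarith)
end
end

section
/- Fix 0 < δ < 1 and t > 1. Let 0 < k < t^{δ−1}, let λ satisfy t^{δ−1}/(1−t^{δ−1}) ≤ λ ≤ t^{1−δ}−1, and let φ satisfy 0 < φ < π/2 (and additionally φ < arctan(π/|ln λ|) if λ < 1). Then the function R ↦ Im F(1−k+R e^{iφ}; λ) is strictly increasing on (0, ∞), and Im F(1−k+R e^{iφ}; λ) ≥ 0 for all R ≥ 0. -/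
noncomputable section

/-- `F(z;λ) := (1-z)·Log(1-z) + z·Log z + z·ln λ` (principal logarithms). -/
def Fc (lam : ℝ) (z : ℂ) : ℂ :=
  (1 - z) * Complex.log (1 - z) + z * Complex.log z + z * (Real.log lam : ℂ)

open Complex Filter Set Topology

private lemma fc_hasDerivAt (lam : ℝ) (z : ℂ) (hz : z ∈ Complex.slitPlane)
    (hw : (1 - z) ∈ Complex.slitPlane) :
    HasDerivAt (Fc lam) (Complex.log z - Complex.log (1 - z) + ((Real.log lam : ℝ) : ℂ)) z := by
  have hz0 : z ≠ 0 := Complex.slitPlane_ne_zero hz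
  have hw0 : (1 - z) ≠ 0 := Complex.slitPlane_ne_zero hw
  have h1 : HasDerivAt (fun u : ℂ => u * Complex.log u) (Complex.log (1 - z) + 1) (1 - z) := by
    have h := (hasDerivAt_id (1 - z)).mul (Complex.hasDerivAt_log hw)
    refine h.congr_deriv ?_
    rw [id_eq, mul_inv_cancel₀ hw0]; ring
  have hi : HasDerivAt (fun u : ℂ => 1 - u) (-1) z := (hasDerivAt_id z).const_sub 1
  have h2 : HasDerivAt (fun u : ℂ => (1 - u) * Complex.log (1 - u))
      (-(Complex.log (1 - z) + 1)) z := by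
    have h := h1.comp z hi
    have e : (Complex.log (1 - z) + 1) * (-1) = -(Complex.log (1 - z) + 1) := by ring
    rw [e] at h
    simpa [Function.comp_def] using h
  have h3 : HasDerivAt (fun u : ℂ => u * Complex.log u) (Complex.log z + 1) z := by
    have h := (hasDerivAt_id z).mul (Complex.hasDerivAt_log hz)
    refine h.congr_deriv ?_
    rw [id_eq, mul_inv_cancel₀ hz0]; ring
  have h4 : HasDerivAt (fun u : ℂ => u * ((Real.log lam : ℝ) : ℂ)) ((Real.log lam : ℝ) : ℂ) z := by
    simpa using (hasDerivAt_id z).mul_const ((Real.log lam : ℝ) : ℂ)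
  have h5 := (h2.add h3).add h4
  have e2 : -(Complex.log (1 - z) + 1) + (Complex.log z + 1) + ((Real.log lam : ℝ) : ℂ)
      = Complex.log z - Complex.log (1 - z) + ((Real.log lam : ℝ) : ℂ) := by ring
  rw [e2] at h5
  exact h5

set_option maxHeartbeats 2000000 in
/-- `Im F` is strictly increasing and non-negative along the contour. -/
theorem stmt_14 (δ t : ℝ) (hδ0 : 0 < δ) (hδ1 : δ < 1) (ht : 1 < t)
    (k lam φ : ℝ) (hk0 : 0 < k) (hk1 : k < t ^ (δ - 1))
    (hlam1 : t ^ (δ - 1) / (1 - t ^ (δ - 1)) ≤ lam) (hlam2 : lam ≤ t ^ (1 - δ) - 1)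
    (hφ0 : 0 < φ) (hφ1 : φ < Real.pi / 2)
    (hφ2 : lam < 1 → φ < Real.arctan (Real.pi / |Real.log lam|)) :
    StrictMonoOn
        (fun R : ℝ =>
          (Fc lam (((1 - k : ℝ) : ℂ) + (R : ℂ) * Complex.exp (Complex.I * (φ : ℂ)))).im)
        (Set.Ioi 0) ∧
      ∀ R : ℝ, 0 ≤ R →
        0 ≤ (Fc lam (((1 - k : ℝ) : ℂ) + (R : ℂ) * Complex.exp (Complex.I * (φ : ℂ)))).im := by
  have hπ := Real.pi_pos
  set c : ℝ := Real.cos φ with hc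
  set s : ℝ := Real.sin φ with hs
  have hcpos : 0 < c := Real.cos_pos_of_mem_Ioo ⟨by linarith, hφ1⟩
  have hspos : 0 < s := Real.sin_pos_of_pos_of_lt_pi hφ0 (by linarith)
  have hcs2 : s ^ 2 + c ^ 2 = 1 := Real.sin_sq_add_cos_sq φ
  have ha0 : 0 < t ^ (δ - 1) := Real.rpow_pos_of_pos (by linarith) _
  have ha1 : t ^ (δ - 1) < 1 := Real.rpow_lt_one_of_one_lt_of_neg ht (by linarith)
  have hk1' : k < 1 := hk1.trans ha1
  have h1k : 0 < 1 - k := by linarith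
  have hlampos : 0 < lam := lt_of_lt_of_le (div_pos ha0 (by linarith)) hlam1
  set L : ℝ := Real.log lam with hLdef
  have hlamk : k < lam * (1 - k) := by
    have h := (div_le_iff₀ (by linarith : (0:ℝ) < 1 - t ^ (δ - 1))).mp hlam1
    nlinarith [hk1, ha1, hlampos]
  -- the limit value at infinity is positive
  have hGinf : 0 < Real.pi * c + s * L := by
    rcases le_or_gt 1 lam with h1 | h1
    · have h0 : 0 ≤ L := Real.log_nonneg h1
      nlinarith [mul_nonneg hspos.le h0, mul_pos hπ hcpos]
    · have hLneg : L < 0 := Real.log_neg hlampos h1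
      have habs : |L| = -L := abs_of_neg hLneg
      have habs0 : 0 < |L| := by rw [habs]; linarith
      have h2 := hφ2 h1
      have htan : Real.tan φ < Real.pi / |L| := by
        have h3 := Real.tan_lt_tan_of_lt_of_lt_pi_div_two (by linarith : -(Real.pi/2) < φ)
          (Real.arctan_lt_pi_div_two _) h2
        rwa [Real.tan_arctan] at h3
      rw [Real.tan_eq_sin_div_cos] at htan
      have h4 := (div_lt_div_iff₀ hcpos habs0).mp htan
      rw [habs] at h4
      nlinarith
  set E : ℂ := Complex.exp (Complex.I * (φ : ℂ)) with hE
  have hEre : E.re = c := by simp [hE, Complex.exp_re, hc]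
  have hEim : E.im = s := by simp [hE, Complex.exp_im, hs]
  set Z : ℝ → ℂ := fun x : ℝ => ((1 - k : ℝ) : ℂ) + (x : ℂ) * E with hZ
  have hzre : ∀ x : ℝ, (Z x).re = 1 - k + x * c := by
    intro x; simp [hZ, Complex.add_re, Complex.mul_re, hEre, hEim]
  have hzim : ∀ x : ℝ, (Z x).im = x * s := by
    intro x; simp [hZ, Complex.add_im, Complex.mul_im, hEre, hEim]
  have hwre : ∀ x : ℝ, (1 - Z x).re = k - x * c := by
    intro x; simp only [Complex.sub_re, Complex.one_re, hzre]; ring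
  have hwim : ∀ x : ℝ, (1 - Z x).im = -(x * s) := by
    intro x; simp only [Complex.sub_im, Complex.one_im, hzim]; ring
  have hzslit : ∀ x : ℝ, 0 ≤ x → Z x ∈ Complex.slitPlane := by
    intro x hx
    rcases eq_or_lt_of_le hx with h | h
    · exact Complex.mem_slitPlane_iff.2 (Or.inl (by rw [hzre, ← h]; linarith))
    · exact Complex.mem_slitPlane_iff.2 (Or.inr (by rw [hzim]; positivity))
  have hwslit : ∀ x : ℝ, 0 ≤ x → (1 - Z x) ∈ Complex.slitPlane := by
    intro x hx
    rcases eq_or_lt_of_le hx with h | h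
    · exact Complex.mem_slitPlane_iff.2 (Or.inl (by rw [hwre, ← h]; linarith))
    · refine Complex.mem_slitPlane_iff.2 (Or.inr ?_)
      rw [hwim]
      have : 0 < x * s := by positivity
      intro hcon; rw [neg_eq_zero] at hcon; linarith
  have hZD : ∀ x : ℝ, HasDerivAt Z E x := by
    intro x
    have h1 : HasDerivAt (fun x : ℝ => (x : ℂ)) 1 x := by
      simpa using (hasDerivAt_id x).ofReal_comp
    rw [hZ]
    simpa using (h1.mul_const E).const_add ((1 - k : ℝ) : ℂ)
  set G : ℝ → ℝ :=
    fun x : ℝ => (E * (Complex.log (Z x) - Complex.log (1 - Z x) + (L : ℂ))).im with hGdef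
  -- derivative of g is G
  have hgD : ∀ x : ℝ, 0 < x →
      HasDerivAt (fun r : ℝ => (Fc lam (Z r)).im) (G x) x := by
    intro x hx
    have hF := fc_hasDerivAt lam (Z x) (hzslit x hx.le) (hwslit x hx.le)
    have h1 : HasDerivAt (fun r : ℝ => Fc lam (Z r))
        (E * (Complex.log (Z x) - Complex.log (1 - Z x) + (L : ℂ))) x := by
      have h := (hF.hasFDerivAt.restrictScalars ℝ).comp_hasDerivAt x (hZD x)
      rw [hLdef]
      simpa [smul_eq_mul, Function.comp_def] using h
    have h2 := Complex.imCLM.hasFDerivAt.comp_hasDerivAt x h1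
    exact h2
  -- derivative of G
  have hGD : ∀ x : ℝ, 0 < x →
      HasDerivAt G ((E ^ 2 * ((Z x) * (1 - Z x))⁻¹).im) x := by
    intro x hx
    have hz := hzslit x hx.le
    have hw := hwslit x hx.le
    have hz0 : Z x ≠ 0 := Complex.slitPlane_ne_zero hz
    have hw0 : (1 - Z x) ≠ 0 := Complex.slitPlane_ne_zero hw
    have h1 : HasDerivAt (fun r : ℝ => Complex.log (Z r)) (E * (Z x)⁻¹) x := by
      have h := ((Complex.hasDerivAt_log hz).hasFDerivAt.restrictScalars ℝ).comp_hasDerivAt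
        x (hZD x)
      simpa [smul_eq_mul, Function.comp_def] using h
    have hwD : HasDerivAt (fun r : ℝ => 1 - Z r) (-E) x := (hZD x).const_sub 1
    have h2 : HasDerivAt (fun r : ℝ => Complex.log (1 - Z r)) (-E * (1 - Z x)⁻¹) x := by
      have h := ((Complex.hasDerivAt_log hw).hasFDerivAt.restrictScalars ℝ).comp_hasDerivAt
        x hwD
      simpa [smul_eq_mul, Function.comp_def] using h
    have h3 := ((h1.sub h2).add_const ((L : ℝ) : ℂ)).const_mul E
    have hval : E * (E * (Z x)⁻¹ - -E * (1 - Z x)⁻¹) = E ^ 2 * ((Z x) * (1 - Z x))⁻¹ := by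
      field_simp
      ring
    rw [hval] at h3
    have h4 := Complex.imCLM.hasFDerivAt.comp_hasDerivAt x h3
    exact h4
  -- formula for the derivative of G
  have hDGval : ∀ x : ℝ, 0 ≤ x →
      (E ^ 2 * ((Z x) * (1 - Z x))⁻¹).im
        = s * (2*k*(1-k)*c + (2*k-1)*x) / Complex.normSq ((Z x) * (1 - Z x)) := by
    intro x hx
    have hz0 : Z x ≠ 0 := Complex.slitPlane_ne_zero (hzslit x hx)
    have hw0 : (1 - Z x) ≠ 0 := Complex.slitPlane_ne_zero (hwslit x hx)
    have hW0 : (Z x) * (1 - Z x) ≠ 0 := mul_ne_zero hz0 hw0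
    have hWre : ((Z x) * (1 - Z x)).re = (1-k+x*c)*(k-x*c) - (x*s)*(-(x*s)) := by
      rw [Complex.mul_re, hzre, hzim, hwre, hwim]
    have hWim : ((Z x) * (1 - Z x)).im = (1-k+x*c)*(-(x*s)) + (x*s)*(k-x*c) := by
      rw [Complex.mul_im, hzre, hzim, hwre, hwim]
    have hE2re : (E^2).re = c*c - s*s := by rw [sq, Complex.mul_re, hEre, hEim]
    have hE2im : (E^2).im = c*s + s*c := by rw [sq, Complex.mul_im, hEre, hEim]
    have key : (c*c - s*s) * (-((Z x) * (1 - Z x)).im) + (c*s + s*c) * ((Z x) * (1 - Z x)).re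
        = s * (2*k*(1-k)*c + (2*k-1)*x) := by
      rw [hWre, hWim]; linear_combination ((2*k-1)*x*s) * hcs2
    calc (E^2 * ((Z x) * (1 - Z x))⁻¹).im
        = ((c*c - s*s) * (-((Z x) * (1 - Z x)).im)
            + (c*s + s*c) * ((Z x) * (1 - Z x)).re) / Complex.normSq ((Z x) * (1 - Z x)) := by
          rw [Complex.mul_im, Complex.inv_re, Complex.inv_im, hE2re, hE2im]; ring
      _ = _ := by rw [key]
  -- continuity of G on [0,∞)
  have hZcont : Continuous Z := by
    rw [hZ]; exact continuous_const.add (Complex.continuous_ofReal.mul continuous_const)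
  have hGcont : ContinuousOn G (Set.Ici (0:ℝ)) := by
    intro x hx
    have h1 : ContinuousAt (fun r : ℝ => Complex.log (Z r)) x :=
      hZcont.continuousAt.clog (hzslit x hx)
    have h2 : ContinuousAt (fun r : ℝ => Complex.log (1 - Z r)) x :=
      (continuous_const.sub hZcont).continuousAt.clog (hwslit x hx)
    have h3 : ContinuousAt G x := by
      rw [hGdef]
      exact (Complex.continuous_im.continuousAt.comp
        (((h1.sub h2).add continuousAt_const).const_mul E))
    exact h3.continuousWithinAt
  -- continuity of g on [0,∞)
  have hgcont : ContinuousOn (fun r : ℝ => (Fc lam (Z r)).im) (Set.Ici (0:ℝ)) := by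
    intro x hx
    have h1 : ContinuousAt (fun r : ℝ => Complex.log (Z r)) x :=
      hZcont.continuousAt.clog (hzslit x hx)
    have h2 : ContinuousAt (fun r : ℝ => Complex.log (1 - Z r)) x :=
      (continuous_const.sub hZcont).continuousAt.clog (hwslit x hx)
    have h3 : ContinuousAt (fun r : ℝ => Fc lam (Z r)) x := by
      unfold Fc
      exact ((((continuous_const.sub hZcont).continuousAt.mul h2).add
        (hZcont.continuousAt.mul h1)).add (hZcont.continuousAt.mul continuousAt_const))
    exact (Complex.continuous_im.continuousAt.comp h3).continuousWithinAt
  -- value of G at 0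
  have hz0eq : Z 0 = ((1 - k : ℝ) : ℂ) := by rw [hZ]; simp
  have hw0eq : (1:ℂ) - ((1 - k : ℝ) : ℂ) = ((k : ℝ) : ℂ) := by push_cast; ring
  have hG0 : G 0 = s * (L + Real.log (1-k) - Real.log k) := by
    have h1 : Complex.log (Z 0) = ((Real.log (1-k) : ℝ) : ℂ) := by
      rw [hz0eq, Complex.ofReal_log h1k.le]
    have h2 : Complex.log (1 - Z 0) = ((Real.log k : ℝ) : ℂ) := by
      rw [hz0eq, hw0eq, Complex.ofReal_log hk0.le]
    show (E * (Complex.log (Z 0) - Complex.log (1 - Z 0) + (L : ℂ))).im = _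
    rw [h1, h2,
      show ((Real.log (1-k) : ℝ) : ℂ) - ((Real.log k : ℝ) : ℂ) + (L : ℂ)
        = ((Real.log (1-k) - Real.log k + L : ℝ) : ℂ) by push_cast; ring,
      Complex.mul_im]
    simp only [Complex.ofReal_im, Complex.ofReal_re, hEim, mul_zero, zero_add]
    ring
  have hG0pos : 0 < G 0 := by
    rw [hG0]
    have hlog : Real.log k < Real.log (lam * (1-k)) := Real.log_lt_log hk0 hlamk
    rw [Real.log_mul (ne_of_gt hlampos) (ne_of_gt h1k)] at hlog
    have : 0 < L + Real.log (1-k) - Real.log k := by rw [hLdef]; linarith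
    exact mul_pos hspos this
  -- the limit of G at infinity
  have hEslit : E ∈ Complex.slitPlane := Complex.mem_slitPlane_iff.2 (Or.inl (by
    rw [hEre]; exact hcpos))
  have hnEslit : -E ∈ Complex.slitPlane := Complex.mem_slitPlane_iff.2 (Or.inr (by
    rw [Complex.neg_im, hEim]; intro hcon; rw [neg_eq_zero] at hcon; linarith))
  have hargE : Complex.arg E = φ := by
    have hEeq : E = ((c : ℝ) : ℂ) + ((s : ℝ) : ℂ) * Complex.I := by
      apply Complex.ext <;> simp [hEre, hEim]
    rw [hEeq, hc, hs, Complex.ofReal_cos, Complex.ofReal_sin]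
    apply Complex.arg_cos_add_sin_mul_I
    rw [Set.mem_Ioc]
    constructor <;> linarith
  have hargnE : Complex.arg (-E) = φ - Real.pi := by
    rw [Complex.arg_neg_eq_arg_sub_pi_of_im_pos (by rw [hEim]; exact hspos), hargE]
  have habsE : ‖E‖ = 1 := by
    rw [hE, Complex.norm_exp]
    simp
  -- auxiliary tendsto of rescaled points
  have hζ : Tendsto (fun r : ℝ => ((((1-k)/r : ℝ)) : ℂ) + E) atTop (𝓝 E) := by
    have h1 : Tendsto (fun r : ℝ => (1-k)/r) atTop (𝓝 0) :=
      tendsto_const_nhds.div_atTop tendsto_id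
    have h2 : Tendsto (fun r : ℝ => (((1-k)/r : ℝ) : ℂ)) atTop (𝓝 (0:ℂ)) := by
      exact (Complex.continuous_ofReal.tendsto 0).comp h1
    simpa using h2.add_const E
  have hξ : Tendsto (fun r : ℝ => (((k/r : ℝ)) : ℂ) - E) atTop (𝓝 (-E)) := by
    have h1 : Tendsto (fun r : ℝ => k/r) atTop (𝓝 0) :=
      tendsto_const_nhds.div_atTop tendsto_id
    have h2 : Tendsto (fun r : ℝ => ((k/r : ℝ) : ℂ)) atTop (𝓝 (0:ℂ)) := by
      exact (Complex.continuous_ofReal.tendsto 0).comp h1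
    simpa using h2.sub_const E
  have hzfact : ∀ r : ℝ, 0 < r → Z r = (r : ℂ) * (((((1-k)/r : ℝ)) : ℂ) + E) := by
    intro r hr
    have hr0 : (r:ℝ) ≠ 0 := ne_of_gt hr
    have hr0' : (r : ℂ) ≠ 0 := Complex.ofReal_ne_zero.2 hr0
    show ((1 - k : ℝ) : ℂ) + (r : ℂ) * E = _
    rw [Complex.ofReal_div]
    field_simp
  have hwfact : ∀ r : ℝ, 0 < r → 1 - Z r = (r : ℂ) * ((((k/r : ℝ)) : ℂ) - E) := by
    intro r hr
    have hr0 : (r:ℝ) ≠ 0 := ne_of_gt hr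
    have hr0' : (r : ℂ) ≠ 0 := Complex.ofReal_ne_zero.2 hr0
    show (1:ℂ) - (((1 - k : ℝ) : ℂ) + (r : ℂ) * E) = _
    rw [Complex.ofReal_div]
    field_simp
    push_cast
    ring
  -- limits of arguments
  have T1 : Tendsto (fun r : ℝ => (Complex.log (Z r)).im) atTop (𝓝 φ) := by
    have h1 : Tendsto (fun r : ℝ => Complex.arg (((((1-k)/r : ℝ)) : ℂ) + E)) atTop (𝓝 φ) := by
      have h := (Complex.continuousAt_arg hEslit).tendsto.comp hζ
      rw [hargE] at h
      simpa [Function.comp_def] using h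
    apply h1.congr'
    filter_upwards [eventually_gt_atTop (0:ℝ)] with r hr
    rw [Complex.log_im, hzfact r hr, Complex.arg_real_mul _ hr]
  have T2 : Tendsto (fun r : ℝ => (Complex.log (1 - Z r)).im) atTop (𝓝 (φ - Real.pi)) := by
    have h1 : Tendsto (fun r : ℝ => Complex.arg (((k/r : ℝ) : ℂ) - E)) atTop
        (𝓝 (φ - Real.pi)) := by
      have h := (Complex.continuousAt_arg hnEslit).tendsto.comp hξ
      rw [hargnE] at h
      simpa [Function.comp_def] using h
    apply h1.congr'
    filter_upwards [eventually_gt_atTop (0:ℝ)] with r hr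
    rw [Complex.log_im, hwfact r hr, Complex.arg_real_mul _ hr]
  -- limit of the log-modulus difference
  have T3 : Tendsto (fun r : ℝ =>
      (Complex.log (Z r)).re - (Complex.log (1 - Z r)).re) atTop (𝓝 0) := by
    have haζ : Tendsto (fun r : ℝ => ‖((((1-k)/r : ℝ)) : ℂ) + E‖) atTop (𝓝 1) := by
      have h := (continuous_norm.tendsto E).comp hζ
      rw [habsE] at h
      simpa [Function.comp_def] using h
    have haξ : Tendsto (fun r : ℝ => ‖((k/r : ℝ) : ℂ) - E‖) atTop (𝓝 1) := by
      have h := (continuous_norm.tendsto (-E)).comp hξ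
      have h2 : ‖-E‖ = 1 := by rw [norm_neg, habsE]
      rw [h2] at h
      simpa [Function.comp_def] using h
    have hlζ : Tendsto (fun r : ℝ =>
        Real.log (‖((((1-k)/r : ℝ)) : ℂ) + E‖)) atTop (𝓝 0) := by
      have := ((Real.continuousAt_log one_ne_zero).tendsto).comp haζ
      simpa [Function.comp_def] using this
    have hlξ : Tendsto (fun r : ℝ =>
        Real.log (‖((k/r : ℝ) : ℂ) - E‖)) atTop (𝓝 0) := by
      have := ((Real.continuousAt_log one_ne_zero).tendsto).comp haξ
      simpa [Function.comp_def] using this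
    have hsub := hlζ.sub hlξ
    rw [sub_zero] at hsub
    apply hsub.congr'
    filter_upwards [eventually_gt_atTop (0:ℝ),
      haζ.eventually_const_lt (by norm_num : (1:ℝ)/2 < 1),
      haξ.eventually_const_lt (by norm_num : (1:ℝ)/2 < 1)] with r hr h2 h3
    rw [Complex.log_re, Complex.log_re, hwfact r hr, hzfact r hr, norm_mul, norm_mul,
      Complex.norm_real, Real.norm_eq_abs, abs_of_pos hr,
      Real.log_mul (ne_of_gt hr) (by linarith), Real.log_mul (ne_of_gt hr) (by linarith)]
    ring
  -- the limit of G at infinity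
  have hGtends : Tendsto G atTop (𝓝 (Real.pi * c + s * L)) := by
    have hform : ∀ r : ℝ, G r = c * ((Complex.log (Z r)).im - (Complex.log (1 - Z r)).im)
        + s * ((Complex.log (Z r)).re - (Complex.log (1 - Z r)).re + L) := by
      intro r
      rw [hGdef]
      simp only [Complex.mul_im, Complex.add_im, Complex.sub_im, Complex.add_re,
        Complex.sub_re, Complex.ofReal_re, Complex.ofReal_im, hEre, hEim]
      ring
    have h := ((T1.sub T2).const_mul c).add ((T3.add_const L).const_mul s)
    have heq : c * (φ - (φ - Real.pi)) + s * (0 + L) = Real.pi * c + s * L := by ring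
    rw [heq] at h
    exact h.congr (fun r => (hform r).symm)
  -- positivity of G on (0,∞)
  have hGpos : ∀ x : ℝ, 0 < x → 0 < G x := by
    intro x₀ hx₀
    rcases le_or_gt ((1-2*k)*x₀) (2*k*(1-k)*c) with hcase | hcase
    · -- G is increasing on [0, x₀]
      have hmono : StrictMonoOn G (Set.Icc 0 x₀) := by
        apply strictMonoOn_of_deriv_pos (convex_Icc 0 x₀)
          (hGcont.mono (fun y hy => hy.1))
        intro y hy
        rw [interior_Icc] at hy
        rw [(hGD y hy.1).deriv, hDGval y hy.1.le]
        have hz0 : Z y ≠ 0 := Complex.slitPlane_ne_zero (hzslit y hy.1.le)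
        have hw0 : (1 - Z y) ≠ 0 := Complex.slitPlane_ne_zero (hwslit y hy.1.le)
        have hns : 0 < Complex.normSq ((Z y) * (1 - Z y)) :=
          Complex.normSq_pos.2 (mul_ne_zero hz0 hw0)
        apply div_pos _ hns
        have hnum : 0 < 2*k*(1-k)*c + (2*k-1)*y := by
          rcases le_or_gt (1-2*k) 0 with h12 | h12
          · nlinarith [mul_nonneg (by linarith : (0:ℝ) ≤ 2*k-1) hy.1.le,
              mul_pos (mul_pos hk0 h1k) hcpos]
          · nlinarith [mul_lt_mul_of_pos_left hy.2 h12,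
              mul_pos (mul_pos hk0 h1k) hcpos]
        exact mul_pos hspos hnum
      have := hmono (Set.left_mem_Icc.2 hx₀.le) (Set.right_mem_Icc.2 hx₀.le) hx₀
      linarith
    · -- G is decreasing on [x₀, ∞)
      have h12k : 0 < 1 - 2*k := by
        nlinarith [mul_pos (mul_pos (mul_pos (by norm_num : (0:ℝ) < 2) hk0) h1k) hcpos]
      have hanti : StrictAntiOn G (Set.Ici x₀) := by
        apply strictAntiOn_of_deriv_neg (convex_Ici x₀)
          (hGcont.mono (fun y hy => le_trans hx₀.le hy))
        intro y hy
        rw [interior_Ici] at hy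
        have hy0 : 0 < y := lt_trans hx₀ hy
        rw [(hGD y hy0).deriv, hDGval y hy0.le]
        have hz0 : Z y ≠ 0 := Complex.slitPlane_ne_zero (hzslit y hy0.le)
        have hw0 : (1 - Z y) ≠ 0 := Complex.slitPlane_ne_zero (hwslit y hy0.le)
        have hns : 0 < Complex.normSq ((Z y) * (1 - Z y)) :=
          Complex.normSq_pos.2 (mul_ne_zero hz0 hw0)
        apply div_neg_of_neg_of_pos _ hns
        have hnum : 2*k*(1-k)*c + (2*k-1)*y < 0 := by
          nlinarith [mul_lt_mul_of_pos_left hy h12k]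
        exact mul_neg_of_pos_of_neg hspos hnum
      have hev : ∀ᶠ r in atTop, G r ≤ G x₀ := by
        filter_upwards [eventually_ge_atTop x₀] with r hr
        rcases eq_or_lt_of_le hr with h | h
        · rw [← h]
        · exact (hanti Set.self_mem_Ici hr h).le
      have := le_of_tendsto hGtends hev
      linarith
  -- strict monotonicity of g on [0,∞)
  have hgmono : StrictMonoOn (fun r : ℝ => (Fc lam (Z r)).im) (Set.Ici (0:ℝ)) := by
    apply strictMonoOn_of_deriv_pos (convex_Ici 0) hgcont
    intro x hx
    rw [interior_Ici] at hx
    rw [(hgD x hx).deriv]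
    exact hGpos x hx
  -- value of g at 0
  have hg0 : (Fc lam (Z 0)).im = 0 := by
    rw [hz0eq]
    unfold Fc
    rw [hw0eq, ← Complex.ofReal_log hk0.le, ← Complex.ofReal_log h1k.le,
      ← Complex.ofReal_mul, ← Complex.ofReal_mul, ← Complex.ofReal_mul,
      ← Complex.ofReal_add, ← Complex.ofReal_add, Complex.ofReal_im]
  constructor
  · exact hgmono.mono Set.Ioi_subset_Ici_self
  · intro R hR
    rcases eq_or_lt_of_le hR with h | h
    · rw [← h]
      exact hg0.ge
    · have hlt : (Fc lam (Z 0)).im < (Fc lam (Z R)).im :=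
        hgmono Set.self_mem_Ici (le_of_lt h) h
      rw [hg0] at hlt
      exact hlt.le
end
end

section
/- Let 0 < δ < 1, t > 1, λ > 0, and λ_c := t^{δ−1}/(1−t^{δ−1}). Then for every real ζ with 0 ≤ ζ < 1 and λ_c·ζ < 1, the series Σ_{n=2}^{∞} (t^{δ−1}/(n(n−1)))·(1 − (−λ_c)^{n−1})·ζ^n converges absolutely and F(1 − t^{δ−1}(1−ζ); λ) = F(1 − t^{δ−1}; λ) + t^{δ−1}·ln(λ/λ_c)·ζ + Σ_{n=2}^{∞} (t^{δ−1}/(n(n−1)))·(1 − (−λ_c)^{n−1})·ζ^n. -/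
noncomputable section

/-- The real-valued phase `F(x;λ) := (1−x)·ln(1−x) + x·ln x + x·ln λ`. -/
def Freal (lam x : ℝ) : ℝ :=
  (1 - x) * Real.log (1 - x) + x * Real.log x + x * Real.log lam

lemma key (z : ℝ) (hz : |z| < 1) :
    HasSum (fun n : ℕ => z ^ (n + 2) / (((n : ℝ) + 2) * ((n : ℝ) + 1)))
      ((1 - z) * Real.log (1 - z) + z) := by
  have h1 := Real.hasSum_pow_div_log_of_abs_lt_one hz
  have h2 := h1.mul_left z
  have h3 : HasSum (fun n : ℕ => z ^ (n + 1 + 1) / ((n : ℝ) + 1 + 1))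
      (-Real.log (1 - z) - z) := by
    have := (hasSum_nat_add_iff' (f := fun n : ℕ => z ^ (n + 1) / ((n : ℝ) + 1)) 1).2 h1
    simpa using this
  have h4 := h2.sub h3
  convert h4 using 1
  · rfl
  · funext n
    have hn1 : ((n : ℝ) + 1) ≠ 0 := by positivity
    have hn2 : ((n : ℝ) + 2) ≠ 0 := by positivity
    field_simp
    ring
  · ring

/-- Taylor expansion of `F(1 − t^{δ−1}(1−ζ); λ)` about `ζ = 0`. -/
theorem stmt_19 (δ t lam : ℝ) (hδ0 : 0 < δ) (hδ1 : δ < 1) (ht : 1 < t) (hlam : 0 < lam)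
    (ζ : ℝ) (hζ0 : 0 ≤ ζ) (hζ1 : ζ < 1) (hζ2 : lamc δ t * ζ < 1) :
    Summable (fun n : ℕ =>
        |t ^ (δ - 1) / (((n : ℝ) + 2) * ((n : ℝ) + 1)) *
          (1 - (-lamc δ t) ^ (n + 1)) * ζ ^ (n + 2)|) ∧
      Freal lam (1 - t ^ (δ - 1) * (1 - ζ)) =
        Freal lam (1 - t ^ (δ - 1)) + t ^ (δ - 1) * Real.log (lam / lamc δ t) * ζ +
          ∑' n : ℕ, t ^ (δ - 1) / (((n : ℝ) + 2) * ((n : ℝ) + 1)) *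
            (1 - (-lamc δ t) ^ (n + 1)) * ζ ^ (n + 2) := by
  set a : ℝ := t ^ (δ - 1) with ha
  have ht0 : 0 < t := lt_trans one_pos ht
  have ha0 : 0 < a := Real.rpow_pos_of_pos ht0 _
  have ha1 : a < 1 := by
    rw [ha]
    calc t ^ (δ - 1) < t ^ (0 : ℝ) :=
          Real.rpow_lt_rpow_left_iff ht |>.2 (by linarith)
      _ = 1 := Real.rpow_zero t
  set L : ℝ := lamc δ t with hL
  have hL0 : 0 < L := div_pos ha0 (by linarith)
  have hrel : (1 - a) * L = a := by
    have h1a : (1 : ℝ) - a ≠ 0 := by linarith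
    rw [hL, lamc, ← ha]
    field_simp
  set w : ℝ := L * ζ with hw
  have hw0 : 0 ≤ w := mul_nonneg hL0.le hζ0
  have hw1 : w < 1 := hζ2
  have hterm : ∀ n : ℕ, a / (((n : ℝ) + 2) * ((n : ℝ) + 1)) *
        (1 - (-L) ^ (n + 1)) * ζ ^ (n + 2) =
      a * (ζ ^ (n + 2) / (((n : ℝ) + 2) * ((n : ℝ) + 1))) +
        (1 - a) * ((-w) ^ (n + 2) / (((n : ℝ) + 2) * ((n : ℝ) + 1))) := by
    intro n
    have h1 : (-w) ^ (n + 2) = (-L) ^ (n + 2) * ζ ^ (n + 2) := by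
      rw [hw, ← neg_mul, mul_pow]
    have h2 : (1 - a) * (-L) ^ (n + 2) = -(a * (-L) ^ (n + 1)) := by
      rw [pow_succ]
      linear_combination (-L) ^ (n + 1) * -hrel
    rw [h1]
    linear_combination (-(ζ ^ (n + 2) / (((n : ℝ) + 2) * ((n : ℝ) + 1)))) * h2
  have k1 := (key ζ (by rw [abs_of_nonneg hζ0]; exact hζ1)).mul_left a
  have k2 := (key (-w) (by rw [abs_neg, abs_of_nonneg hw0]; exact hw1)).mul_left (1 - a)
  have hS : HasSum (fun n : ℕ => a / (((n : ℝ) + 2) * ((n : ℝ) + 1)) *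
        (1 - (-L) ^ (n + 1)) * ζ ^ (n + 2))
      (a * ((1 - ζ) * Real.log (1 - ζ) + ζ) +
        (1 - a) * ((1 - -w) * Real.log (1 - -w) + -w)) := by
    have h := k1.add k2
    convert h using 1
    · rfl
    exact funext hterm
  constructor
  · have k3 := (key w (by rw [abs_of_nonneg hw0]; exact hw1)).mul_left (1 - a)
    apply Summable.of_nonneg_of_le (fun n => abs_nonneg _) _ (k1.summable.add k3.summable)
    intro n
    rw [hterm n]
    have hD : (0 : ℝ) < ((n : ℝ) + 2) * ((n : ℝ) + 1) := by positivity
    calc |a * (ζ ^ (n + 2) / (((n : ℝ) + 2) * ((n : ℝ) + 1))) +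
          (1 - a) * ((-w) ^ (n + 2) / (((n : ℝ) + 2) * ((n : ℝ) + 1)))|
        ≤ |a * (ζ ^ (n + 2) / (((n : ℝ) + 2) * ((n : ℝ) + 1)))| +
          |(1 - a) * ((-w) ^ (n + 2) / (((n : ℝ) + 2) * ((n : ℝ) + 1)))| := abs_add_le _ _
      _ = a * (ζ ^ (n + 2) / (((n : ℝ) + 2) * ((n : ℝ) + 1))) +
          (1 - a) * (w ^ (n + 2) / (((n : ℝ) + 2) * ((n : ℝ) + 1))) := by
          rw [abs_of_nonneg (mul_nonneg ha0.le
              (div_nonneg (pow_nonneg hζ0 _) hD.le)),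
            abs_mul, abs_div, abs_pow, abs_neg, abs_of_nonneg hw0,
            abs_of_nonneg (by linarith : (0:ℝ) ≤ 1 - a), abs_of_nonneg hD.le]
  · rw [hS.tsum_eq]
    have hζ1' : (0 : ℝ) < 1 - ζ := by linarith
    have hw1' : (0 : ℝ) < 1 + w := by linarith
    have e1 : (1 : ℝ) - (1 - a * (1 - ζ)) = a * (1 - ζ) := by ring
    have e2 : (1 : ℝ) - a * (1 - ζ) = (1 - a) * (1 + w) := by
      rw [hw]; linear_combination (-ζ) * hrel
    have e3 : (1 : ℝ) - (1 - a) = a := by ring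
    have e4 : (1 : ℝ) - -w = 1 + w := by ring
    simp only [Freal]
    rw [e1, e2, e3, e4,
      Real.log_mul (ne_of_gt ha0) (ne_of_gt hζ1'),
      Real.log_mul (by linarith : (1:ℝ) - a ≠ 0) (ne_of_gt hw1'),
      Real.log_div (ne_of_gt hlam) (ne_of_gt hL0),
      show Real.log L = Real.log a - Real.log (1 - a) by
        rw [hL, lamc, ← ha, Real.log_div (ne_of_gt ha0) (by linarith)]]
    linear_combination (ζ * (Real.log (1 - a) + 1) + ζ * Real.log lam) * hrel
end
end
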